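/- arXiv:math/0210379 — 14 statements merged into one kernel-verified Lean document; each statement's English description precedes it below -/
import Mathlib

section
/- Let X be a topological space and {f_s : X → [0,∞)}_{s∈S} a family of continuous functions such that f(x) := sup over finite T ⊆ S of ∑_{s∈T} f_s(x) is finite for each x. Then f is continuous if and only if for every x ∈ X and ε > 0 there exist a neighborhood U of x and a finite subset T of S such that ∑_{s∈S∖T} f_s(y) < ε for all y ∈ U. -/
theorem stmt_0 {X : Type*} [TopologicalSpace X] {S : Type*}
    (f : S → X → ℝ) (hcont : ∀ s, Continuous (f s)) (hnn : ∀ s x, 0 ≤ f s x)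
    (F : X → ℝ) (hsum : ∀ x, HasSum (fun s => f s x) (F x)) :
    Continuous F ↔
      ∀ x : X, ∀ ε : ℝ, 0 < ε → ∃ U ∈ nhds x, ∃ T : Finset S,
        ∀ y ∈ U, (∑' s : {s : S // s ∉ T}, f s.1 y) < ε := by
  have tail : ∀ (T : Finset S) (x : X),
      HasSum (fun s : {s : S // s ∉ T} => f s.1 x) (F x - ∑ s ∈ T, f s x) := by
    intro T x
    exact (Finset.hasSum_compl_iff (f := fun s => f s x) T).mpr (by simpa using hsum x)
  have tailsum : ∀ (T : Finset S) (x : X),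
      (∑' s : {s : S // s ∉ T}, f s.1 x) = F x - ∑ s ∈ T, f s x :=
    fun T x => (tail T x).tsum_eq
  have tailnn : ∀ (T : Finset S) (x : X), 0 ≤ F x - ∑ s ∈ T, f s x := by
    intro T x
    rw [← tailsum]
    exact tsum_nonneg fun s => hnn s.1 x
  constructor
  · intro hF x ε hε
    obtain ⟨T, hT⟩ := ((hsum x).eventually
      (eventually_gt_nhds (by linarith : F x - ε / 2 < F x))).exists
    have hG : Continuous (fun y => F y - ∑ s ∈ T, f s y) :=
      hF.sub (continuous_finset_sum T fun s _ => hcont s)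
    refine ⟨{y | F y - ∑ s ∈ T, f s y < ε}, ?_, T, ?_⟩
    · exact (isOpen_lt hG continuous_const).mem_nhds (by simpa using by linarith)
    · intro y hy
      rw [tailsum]
      exact hy
  · intro h
    rw [continuous_iff_continuousAt]
    intro x
    rw [ContinuousAt, Metric.tendsto_nhds]
    intro ε hε
    obtain ⟨U, hU, T, hT⟩ := h x (ε / 3) (by linarith)
    have hg : Continuous (fun y => ∑ s ∈ T, f s y) :=
      continuous_finset_sum T fun s _ => hcont s
    have h1 : ∀ᶠ y in nhds x, dist (∑ s ∈ T, f s y) (∑ s ∈ T, f s x) < ε / 3 :=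
      (hg.continuousAt (x := x)).tendsto (Metric.ball_mem_nhds _ (by linarith))
    filter_upwards [h1, hU] with y hy hyU
    have hx : x ∈ U := mem_of_mem_nhds hU
    have ty : F y - ∑ s ∈ T, f s y < ε / 3 := by rw [← tailsum]; exact hT y hyU
    have tx : F x - ∑ s ∈ T, f s x < ε / 3 := by rw [← tailsum]; exact hT x hx
    have := tailnn T x
    have := tailnn T y
    rw [Real.dist_eq] at hy ⊢
    rw [abs_lt] at hy ⊢
    constructor <;> linarith [hy.1, hy.2]
end

section
/- If {f_s : X → [0,∞)}_{s∈S} is an equicontinuous family of continuous functions whose pointwise sum f = ∑_{s∈S} f_s is finite-valued, then {f_s}_{s∈S} is strongly equicontinuous: for each ε > 0 and x ∈ X there is a neighborhood U of x and a finite T ⊆ S with f_s(y) < ε for all y ∈ U and s ∈ S∖T. -/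
theorem stmt_3 {X : Type*} [TopologicalSpace X] {S : Type*}
    (f : S → X → ℝ) (hcont : ∀ s, Continuous (f s)) (hnn : ∀ s x, 0 ≤ f s x)
    (hequi : ∀ ε : ℝ, 0 < ε → ∀ a : X, ∃ U ∈ nhds a,
        ∀ s, ∀ x ∈ U, ∀ y ∈ U, |f s x - f s y| < ε)
    (hsumm : ∀ x, Summable fun s => f s x) :
    ∀ ε : ℝ, 0 < ε → ∀ x : X, ∃ U ∈ nhds x, ∃ T : Finset S,
      ∀ y ∈ U, ∀ s ∉ T, f s y < ε := by
  intro ε hε x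
  obtain ⟨U, hU, hUequi⟩ := hequi (ε/2) (by linarith) x
  have hx : x ∈ U := mem_of_mem_nhds hU
  have htail := (hsumm x).tendsto_cofinite_zero
  have : ∀ᶠ s in Filter.cofinite, f s x < ε/2 := by
    have := htail.eventually (eventually_lt_nhds (show (0:ℝ) < ε/2 by linarith))
    exact this
  obtain ⟨T, hT⟩ : ∃ T : Finset S, ∀ s ∉ T, f s x < ε/2 := by
    rw [Filter.eventually_cofinite] at this
    exact ⟨this.toFinset, fun s hs => by
      by_contra h
      exact hs (this.mem_toFinset.mpr (by simpa using h))⟩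
  refine ⟨U, hU, T, fun y hy s hs => ?_⟩
  have h1 := hUequi s x hx y hy
  have h2 := hT s hs
  have := abs_lt.mp h1
  linarith [this.1, this.2]
end

section
/- Every equicontinuous partition {f_s}_{s∈S} of a continuous positive finite-valued function f : X → (0,∞) admits a locally finite approximation: there is a partition of unity {g_s}_{s∈S} on X which is locally finite, such that g_s(x) > 0 implies f_s(x) > 0 for every s and x, and the closure of {x : g_s(x) > 0} is contained in {x : f_s(x) > 0} for each s. -/
theorem stmt_5 {X : Type*} [TopologicalSpace X] {S : Type*}
    (f : S → X → ℝ) (hcont : ∀ s, Continuous (f s)) (hnn : ∀ s x, 0 ≤ f s x)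
    (F : X → ℝ) (hFc : Continuous F) (hFpos : ∀ x, 0 < F x)
    (hsum : ∀ x, HasSum (fun s => f s x) (F x))
    (hequi : ∀ ε : ℝ, 0 < ε → ∀ a : X, ∃ U ∈ nhds a,
        ∀ s, ∀ x ∈ U, ∀ y ∈ U, |f s x - f s y| < ε) :
    ∃ g : S → X → ℝ,
      (∀ s, Continuous (g s)) ∧ (∀ s x, 0 ≤ g s x) ∧
      (∀ x, HasSum (fun s => g s x) 1) ∧
      (∀ x : X, ∃ U ∈ nhds x, {s : S | ∃ y ∈ U, g s y ≠ 0}.Finite) ∧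
      (∀ s x, 0 < g s x → 0 < f s x) ∧
      (∀ s, closure {x | 0 < g s x} ⊆ {x | 0 < f s x}) := by
  classical
  rcases isEmpty_or_nonempty X with hX | hX
  · exact ⟨fun _ _ => 0, fun s => continuous_const, fun s x => le_rfl,
      fun x => (hX.false x).elim, fun x => (hX.false x).elim,
      fun s x => (hX.false x).elim, fun s => by simp⟩
  have hS : Nonempty S := by
    by_contra h
    haveI : IsEmpty S := not_nonempty_iff.mp h
    obtain ⟨x⟩ := hX
    exact absurd (hasSum_empty.unique (hsum x)).symm (hFpos x).ne'
  -- boundedness of the family at each point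
  have hbdd : ∀ x, BddAbove (Set.range fun s => f s x) := fun x =>
    ⟨F x, by rintro _ ⟨s, rfl⟩; exact le_hasSum (hsum x) s fun s' _ => hnn s' x⟩
  set M : X → ℝ := fun x => ⨆ s, f s x with hM
  have hMle : ∀ s x, f s x ≤ M x := fun s x => le_ciSup (hbdd x) s
  have hMpos : ∀ x, 0 < M x := by
    intro x
    obtain ⟨s, hs⟩ : ∃ s, 0 < f s x := by
      by_contra h
      push_neg at h
      have : F x ≤ 0 := hasSum_le (fun s => h s) (hsum x) hasSum_zero
      exact absurd this (not_le.mpr (hFpos x))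
    exact hs.trans_le (hMle s x)
  have hMcont : Continuous M := by
    rw [continuous_iff_continuousAt]
    intro a
    rw [ContinuousAt, Metric.tendsto_nhds]
    intro ε hε
    obtain ⟨U, hU, hU'⟩ := hequi (ε / 2) (by linarith) a
    filter_upwards [hU] with x hx
    have hle : ∀ y ∈ U, ∀ z ∈ U, M y ≤ M z + ε / 2 := by
      intro y hy z hz
      refine ciSup_le fun s => ?_
      have := abs_lt.mp (hU' s y hy z hz)
      have := hMle s z
      linarith
    have ha : a ∈ U := mem_of_mem_nhds hU
    rw [Real.dist_eq, abs_lt]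
    constructor
    · have := hle a ha x hx; linarith
    · have := hle x hx a ha; linarith
  -- finiteness of large terms
  have hfin : ∀ x : X, ∀ c : ℝ, 0 < c → {s : S | c ≤ f s x}.Finite := by
    intro x c hc
    have h1 : ∀ᶠ s in Filter.cofinite, dist (f s x) 0 < c :=
      Metric.tendsto_nhds.1 (hsum x).summable.tendsto_cofinite_zero c hc
    refine (Filter.eventually_cofinite.mp h1).subset fun s hs => ?_
    simp only [Set.mem_setOf_eq, Real.dist_eq, sub_zero, not_lt] at *
    calc c ≤ f s x := hs
    _ ≤ |f s x| := le_abs_self _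
  -- the truncated functions
  set h : S → X → ℝ := fun s x => max (f s x - M x / 2) 0 with hh
  have hhcont : ∀ s, Continuous (h s) :=
    fun s => ((hcont s).sub (hMcont.div_const 2)).max continuous_const
  have hhnn : ∀ s x, 0 ≤ h s x := fun s x => le_max_right _ _
  have hhle : ∀ s x, h s x ≤ f s x := fun s x =>
    max_le (by have := hMpos x; linarith) (hnn s x)
  have hsummable : ∀ x, Summable (fun s => h s x) :=
    fun x => (hsum x).summable.of_nonneg_of_le (fun s => hhnn s x) (fun s => hhle s x)
  have hpos_of_h : ∀ s x, 0 < h s x → M x / 2 < f s x := by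
    intro s x hx
    rcases lt_max_iff.mp hx with h1 | h1
    · linarith
    · exact absurd h1 (lt_irrefl 0)
  -- local structure: neighborhood where only finitely many h s are nonzero
  have key : ∀ a : X, ∃ U ∈ nhds a, ∃ T : Set S, T.Finite ∧
      ∀ x ∈ U, ∀ s, s ∉ T → h s x = 0 := by
    intro a
    obtain ⟨U1, hU1, hU1'⟩ := hequi (M a / 8) (by have := hMpos a; linarith) a
    have hU2 : ∀ᶠ x in nhds a, M a * (3 / 4) < M x :=
      (hMcont.tendsto a).eventually (eventually_gt_nhds (by have := hMpos a; linarith))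
    refine ⟨U1 ∩ {x | M a * (3 / 4) < M x}, Filter.inter_mem hU1 hU2,
      {s | M a / 4 ≤ f s a}, hfin a (M a / 4) (by have := hMpos a; linarith), ?_⟩
    rintro x ⟨hx1, hx2⟩ s hs
    simp only [Set.mem_setOf_eq, not_le] at hs hx2
    have habs := abs_lt.mp (hU1' s x hx1 a (mem_of_mem_nhds hU1))
    have : f s x - M x / 2 ≤ 0 := by linarith
    exact max_eq_right this
  -- the sum
  set G : X → ℝ := fun x => ∑' s, h s x with hG
  have hGsum : ∀ x, HasSum (fun s => h s x) (G x) := fun x => (hsummable x).hasSum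
  have hGpos : ∀ x, 0 < G x := by
    intro x
    obtain ⟨s, hs⟩ := exists_lt_of_lt_ciSup
      (show M x / 2 < M x from by have := hMpos x; linarith)
    have h1 : 0 < h s x := lt_max_iff.mpr (Or.inl (by linarith))
    exact h1.trans_le (Summable.le_tsum (hsummable x) s fun s' _ => hhnn s' x)
  have hGcont : Continuous G := by
    rw [continuous_iff_continuousAt]
    intro a
    obtain ⟨U, hU, T, hT, hT'⟩ := key a
    have heq : ∀ x ∈ U, G x = ∑ s ∈ hT.toFinset, h s x := by
      intro x hx
      exact tsum_eq_sum (fun s hs => hT' x hx s (by simpa using hs))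
    have hc : Continuous (fun x => ∑ s ∈ hT.toFinset, h s x) :=
      continuous_finset_sum _ fun s _ => hhcont s
    exact hc.continuousAt.congr
      (Filter.eventuallyEq_of_mem hU fun x hx => (heq x hx).symm)
  refine ⟨fun s x => h s x / G x, ?_, ?_, ?_, ?_, ?_, ?_⟩
  · exact fun s => (hhcont s).div hGcont fun x => (hGpos x).ne'
  · exact fun s x => div_nonneg (hhnn s x) (hGpos x).le
  · intro x
    have := (hGsum x).div_const (G x)
    rwa [div_self (hGpos x).ne'] at this
  · intro x
    obtain ⟨U, hU, T, hT, hT'⟩ := key x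
    refine ⟨U, hU, hT.subset ?_⟩
    rintro s ⟨y, hy, hgy⟩
    by_contra hs
    exact hgy (show h s y / G y = 0 by rw [hT' y hy s hs, zero_div])
  · intro s x hx
    have hx' : 0 < h s x / G x := hx
    have h1 : 0 < h s x := by
      by_contra h1
      have : h s x = 0 := le_antisymm (not_lt.mp h1) (hhnn s x)
      rw [this, zero_div] at hx'
      exact lt_irrefl 0 hx'
    have := hpos_of_h s x h1
    have := hMpos x
    linarith
  · intro s
    have hsub : {x | 0 < h s x / G x} ⊆ {x | M x / 2 ≤ f s x} := by
      intro x hx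
      simp only [Set.mem_setOf_eq] at *
      have h1 : 0 < h s x := by
        by_contra h1
        have : h s x = 0 := le_antisymm (not_lt.mp h1) (hhnn s x)
        rw [this, zero_div] at hx
        exact lt_irrefl 0 hx
      exact (hpos_of_h s x h1).le
    have hclosed : IsClosed {x | M x / 2 ≤ f s x} :=
      isClosed_le (hMcont.div_const 2) (hcont s)
    refine (closure_minimal hsub hclosed).trans fun x hx => ?_
    simp only [Set.mem_setOf_eq] at *
    have := hMpos x
    linarith
end

section
/- Let 𝒰 = {U_n}_{n≥1} be a countable open cover of a topological space X. There exists a partition of unity {p_n}_{n≥1} on X with p_n vanishing on X∖U_n for each n if and only if there exists a family of continuous functions f_n : X → [0,∞) with f_n vanishing on X∖U_n and ∑_{n≥1} f_n(x) > 0 for every x ∈ X. -/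
theorem stmt_6 {X : Type*} [TopologicalSpace X]
    (U : ℕ → Set X) (hUo : ∀ n, IsOpen (U n)) (hUc : ∀ x, ∃ n, x ∈ U n) :
    (∃ p : ℕ → X → ℝ,
      (∀ n, Continuous (p n)) ∧ (∀ n x, p n x ∈ Set.Icc (0 : ℝ) 1) ∧
      (∀ x, HasSum (fun n => p n x) 1) ∧
      (∀ n, ∀ x ∉ U n, p n x = 0)) ↔
    (∃ f : ℕ → X → ℝ,
      (∀ n, Continuous (f n)) ∧ (∀ n x, 0 ≤ f n x) ∧
      (∀ n, ∀ x ∉ U n, f n x = 0) ∧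
      (∀ x, 0 < ∑' n, ENNReal.ofReal (f n x))) := by
  constructor
  · rintro ⟨p, hc, hmem, hsum, hvan⟩
    refine ⟨p, hc, fun n x => (hmem n x).1, hvan, fun x => ?_⟩
    obtain ⟨n, hn⟩ : ∃ n, p n x ≠ 0 := by
      by_contra h
      push_neg at h
      have h1 := hsum x
      simp only [h] at h1
      exact one_ne_zero (h1.unique hasSum_zero)
    calc (0 : ENNReal) < ENNReal.ofReal (p n x) :=
          ENNReal.ofReal_pos.mpr (lt_of_le_of_ne (hmem n x).1 (Ne.symm hn))
      _ ≤ ∑' n, ENNReal.ofReal (p n x) := ENNReal.le_tsum n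
  · rintro ⟨f, hc, hnn, hvan, hpos⟩
    set g : ℕ → X → ℝ := fun n x => min (f n x) ((1/2 : ℝ)^n) with hg
    have hgc : ∀ n, Continuous (g n) := fun n => (hc n).min continuous_const
    have hgnn : ∀ n x, 0 ≤ g n x := fun n x => le_min (hnn n x) (by positivity)
    have hgle : ∀ n x, g n x ≤ (1/2 : ℝ)^n := fun n x => min_le_right _ _
    have hsummable : ∀ x, Summable (fun n => g n x) := fun x =>
      Summable.of_nonneg_of_le (fun n => hgnn n x) (fun n => hgle n x)
        summable_geometric_two
    set S : X → ℝ := fun x => ∑' n, g n x with hS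
    have hScont : Continuous S :=
      continuous_tsum hgc summable_geometric_two (fun n x => by
        rw [Real.norm_eq_abs, abs_of_nonneg (hgnn n x)]; exact hgle n x)
    have hSpos : ∀ x, 0 < S x := by
      intro x
      obtain ⟨n, hn⟩ : ∃ n, 0 < f n x := by
        by_contra h
        push_neg at h
        have hz : ∀ n, f n x = 0 := fun n => le_antisymm (h n) (hnn n x)
        have h2 := hpos x
        simp [hz] at h2
      have hgpos : 0 < g n x := lt_min hn (by positivity)
      exact hgpos.trans_le (le_hasSum (hsummable x).hasSum n (fun j _ => hgnn j x))
    refine ⟨fun n x => g n x / S x, fun n => (hgc n).div hScont (fun x => (hSpos x).ne'),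
      fun n x => ⟨div_nonneg (hgnn n x) (hSpos x).le,
        (div_le_one (hSpos x)).mpr (le_hasSum (hsummable x).hasSum n (fun j _ => hgnn j x))⟩,
      fun x => ?_, fun n x hx => ?_⟩
    · have h1 : HasSum (fun n => g n x / S x) (S x / S x) :=
        (hsummable x).hasSum.div_const _
      rwa [div_self (hSpos x).ne'] at h1
    · have : g n x = 0 := by
        simp [hg, hvan n x hx]
      simp [this]
end

section
/- Let S be a well-ordered set, 𝒰 = {U_s}_{s∈S} an open cover of a space X, and {f_s : X → [0,1]}_{s∈S} a 𝒰-small equicontinuous partition of a positive-valued function f : X → (0,∞]. Define g_s := max(0, f_s − sup_{t<s} f_t). Then {g_s}_{s∈S} is a 𝒰-small equicontinuous partition of a function g : X → (0,1]; in particular ∑_{s∈S} g_s(x) ≤ 1 and ∑_{s∈S} g_s(x) > 0 for every x ∈ X. -/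
/-- If two [0,1]-valued families differ pointwise by at most `c`, their suprema
differ by at most `c`. -/
lemma stmt_8_sup_diff {ι : Sort*} (F G : ι → ℝ) (hF0 : ∀ i, 0 ≤ F i) (hG0 : ∀ i, 0 ≤ G i)
    (hF1 : ∀ i, F i ≤ 1) (hG1 : ∀ i, G i ≤ 1) {c : ℝ} (hc : 0 ≤ c)
    (h : ∀ i, |F i - G i| ≤ c) : |(⨆ i, F i) - ⨆ i, G i| ≤ c := by
  have hbF : BddAbove (Set.range F) := ⟨1, by rintro _ ⟨i, rfl⟩; exact hF1 i⟩
  have hbG : BddAbove (Set.range G) := ⟨1, by rintro _ ⟨i, rfl⟩; exact hG1 i⟩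
  rw [abs_sub_le_iff]
  constructor
  · rw [sub_le_iff_le_add]
    refine Real.iSup_le (fun i => ?_) (add_nonneg hc (Real.iSup_nonneg hG0))
    have h1 := (abs_le.1 (h i)).2
    have h2 := le_ciSup hbG i
    linarith
  · rw [sub_le_iff_le_add]
    refine Real.iSup_le (fun i => ?_) (add_nonneg hc (Real.iSup_nonneg hF0))
    have h1 := (abs_le.1 (h i)).1
    have h2 := le_ciSup hbF i
    linarith

theorem stmt_8 {X : Type*} [TopologicalSpace X] {S : Type*}
    [LinearOrder S] [WellFoundedLT S]
    (U : S → Set X) (hUo : ∀ s, IsOpen (U s)) (hUc : ∀ x, ∃ s, x ∈ U s)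
    (f : S → X → ℝ) (hrange : ∀ s x, f s x ∈ Set.Icc (0 : ℝ) 1)
    (hcont : ∀ s, Continuous (f s))
    (hsmall : ∀ s, ∀ x ∉ U s, f s x = 0)
    (hequi : ∀ ε : ℝ, 0 < ε → ∀ a : X, ∃ V ∈ nhds a,
        ∀ s, ∀ x ∈ V, ∀ y ∈ V, |f s x - f s y| < ε)
    (hpos : ∀ x, 0 < ∑' s, ENNReal.ofReal (f s x)) :
    ∀ g : S → X → ℝ,
      (g = fun s x => max 0 (f s x - ⨆ t : {t : S // t < s}, f t.1 x)) →
      (∀ s, Continuous (g s)) ∧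
      (∀ s, ∀ x ∉ U s, g s x = 0) ∧
      (∀ ε : ℝ, 0 < ε → ∀ a : X, ∃ V ∈ nhds a,
        ∀ s, ∀ x ∈ V, ∀ y ∈ V, |g s x - g s y| < ε) ∧
      (∃ G : X → ℝ, (∀ x, HasSum (fun s => g s x) (G x)) ∧
        ∀ x, 0 < G x ∧ G x ≤ 1) := by
  intro g hg
  set M : S → X → ℝ := fun s x => ⨆ t : {t : S // t < s}, f t.1 x with hM
  have hbdd : ∀ s x, BddAbove (Set.range fun t : {t : S // t < s} => f t.1 x) :=
    fun s x => ⟨1, by rintro _ ⟨t, rfl⟩; exact (hrange _ x).2⟩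
  have hM0 : ∀ s x, 0 ≤ M s x := fun s x => Real.iSup_nonneg fun t => (hrange _ x).1
  have hM1 : ∀ s x, M s x ≤ 1 := fun s x => Real.iSup_le (fun t => (hrange _ x).2) zero_le_one
  have hle : ∀ t s x, t < s → f t x ≤ M s x := fun t s x h => le_ciSup (hbdd s x) ⟨t, h⟩
  have hMmono : ∀ t s x, t < s → M t x ≤ M s x := fun t s x h =>
    Real.iSup_le (fun u => hle u.1 s x (u.2.trans h)) (hM0 s x)
  have hgdef : ∀ s x, g s x = max 0 (f s x - M s x) := by
    intro s x; rw [hg]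
  have hg0 : ∀ s x, 0 ≤ g s x := by intro s x; rw [hgdef]; exact le_max_left _ _
  -- continuity of M
  have hMcont : ∀ s, Continuous (M s) := by
    intro s
    rw [continuous_iff_continuousAt]
    intro a
    rw [ContinuousAt, Metric.tendsto_nhds]
    intro ε hε
    obtain ⟨V, hVmem, hV⟩ := hequi (ε / 2) (by linarith) a
    filter_upwards [hVmem] with x hx
    rw [Real.dist_eq]
    have := stmt_8_sup_diff (fun t : {t : S // t < s} => f t.1 x)
      (fun t : {t : S // t < s} => f t.1 a)
      (fun t => (hrange _ x).1) (fun t => (hrange _ a).1)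
      (fun t => (hrange _ x).2) (fun t => (hrange _ a).2)
      (le_of_lt (by linarith : (0:ℝ) < ε / 2))
      (fun t => le_of_lt (hV t.1 x hx a (mem_of_mem_nhds hVmem)))
    calc |M s x - M s a| ≤ ε / 2 := this
      _ < ε := by linarith
  refine ⟨?_, ?_, ?_, ?_⟩
  · -- continuity of g
    intro s
    have : g s = fun x => max 0 (f s x - M s x) := funext fun x => hgdef s x
    rw [this]
    exact continuous_const.max ((hcont s).sub (hMcont s))
  · -- smallness
    intro s x hx
    rw [hgdef]
    have h1 : f s x = 0 := hsmall s x hx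
    have h2 : 0 ≤ M s x := hM0 s x
    exact max_eq_left (by linarith)
  · -- equicontinuity
    intro ε hε a
    obtain ⟨V, hVmem, hV⟩ := hequi (ε / 3) (by linarith) a
    refine ⟨V, hVmem, fun s x hx y hy => ?_⟩
    rw [hgdef, hgdef, max_comm 0 (f s x - M s x), max_comm 0 (f s y - M s y)]
    have h1 : |max (f s x - M s x) 0 - max (f s y - M s y) 0| ≤
        |(f s x - M s x) - (f s y - M s y)| := abs_max_sub_max_le_abs _ _ _
    have h2 : |M s x - M s y| ≤ ε / 3 := by
      refine stmt_8_sup_diff _ _ (fun t => (hrange _ x).1) (fun t => (hrange _ y).1)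
        (fun t => (hrange _ x).2) (fun t => (hrange _ y).2) (by linarith)
        (fun t => le_of_lt (hV t.1 x hx y hy))
    have h3 : |f s x - f s y| < ε / 3 := hV s x hx y hy
    have h4 : |(f s x - M s x) - (f s y - M s y)| ≤ |f s x - f s y| + |M s x - M s y| := by
      have : (f s x - M s x) - (f s y - M s y) = (f s x - f s y) - (M s x - M s y) := by ring
      rw [this]; exact abs_sub _ _
    calc |max (f s x - M s x) 0 - max (f s y - M s y) 0| ≤ |f s x - f s y| + |M s x - M s y| :=
        h1.trans h4
      _ < ε := by linarith
  · -- the sum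
    -- g s x + M s x = max (M s x) (f s x)
    have hkey : ∀ s x, g s x + M s x = max (M s x) (f s x) := by
      intro s x
      rw [hgdef]
      rcases le_total (f s x) (M s x) with h | h
      · rw [max_eq_left (by linarith), max_eq_left h]; ring
      · rw [max_eq_right (by linarith), max_eq_right h]; ring
    -- upper bound for partial sums over sets below s
    have claim : ∀ (x : X) (n : ℕ) (F : Finset S), F.card ≤ n → ∀ s, (∀ u ∈ F, u < s) →
        ∑ u ∈ F, g u x ≤ M s x := by
      intro x n
      induction n with
      | zero =>
        intro F hF s _
        rw [Finset.card_eq_zero.1 (Nat.le_zero.1 hF), Finset.sum_empty]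
        exact hM0 s x
      | succ n ih =>
        intro F hF s hFs
        rcases Finset.eq_empty_or_nonempty F with rfl | hne
        · rw [Finset.sum_empty]; exact hM0 s x
        · set m := F.max' hne with hm
          have hmF : m ∈ F := F.max'_mem hne
          have hrest : ∀ u ∈ F.erase m, u < m := by
            intro u hu
            exact lt_of_le_of_ne (F.le_max' u (Finset.mem_of_mem_erase hu))
              (Finset.ne_of_mem_erase hu)
          have hcard : (F.erase m).card ≤ n := by
            have := Finset.card_erase_of_mem hmF
            omega
          have h1 : ∑ u ∈ F.erase m, g u x ≤ M m x := ih (F.erase m) hcard m hrest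
          have h2 : ∑ u ∈ F, g u x = g m x + ∑ u ∈ F.erase m, g u x :=
            (Finset.add_sum_erase F _ hmF).symm
          have hms : m < s := hFs m hmF
          have h3 : max (M m x) (f m x) ≤ M s x :=
            max_le (hMmono m s x hms) (hle m s x hms)
          calc ∑ u ∈ F, g u x = g m x + ∑ u ∈ F.erase m, g u x := h2
            _ ≤ g m x + M m x := by linarith
            _ = max (M m x) (f m x) := hkey m x
            _ ≤ M s x := h3
    -- all partial sums are ≤ 1
    have hub : ∀ (x : X) (F : Finset S), ∑ u ∈ F, g u x ≤ 1 := by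
      intro x F
      rcases Finset.eq_empty_or_nonempty F with rfl | hne
      · simp
      · set m := F.max' hne with hm
        have hmF : m ∈ F := F.max'_mem hne
        have hrest : ∀ u ∈ F.erase m, u < m := by
          intro u hu
          exact lt_of_le_of_ne (F.le_max' u (Finset.mem_of_mem_erase hu))
            (Finset.ne_of_mem_erase hu)
        have h1 : ∑ u ∈ F.erase m, g u x ≤ M m x :=
          claim x (F.erase m).card (F.erase m) le_rfl m hrest
        have h2 : ∑ u ∈ F, g u x = g m x + ∑ u ∈ F.erase m, g u x :=
          (Finset.add_sum_erase F _ hmF).symm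
        calc ∑ u ∈ F, g u x = g m x + ∑ u ∈ F.erase m, g u x := h2
          _ ≤ g m x + M m x := by linarith
          _ = max (M m x) (f m x) := hkey m x
          _ ≤ 1 := max_le (hM1 m x) (hrange m x).2
    have hsummable : ∀ x, Summable (fun s => g s x) := fun x =>
      summable_of_sum_le (fun s => hg0 s x) (hub x)
    refine ⟨fun x => ∑' s, g s x, fun x => (hsummable x).hasSum, fun x => ?_⟩
    constructor
    · -- positivity
      -- there exists s with f s x > 0
      have hex : ∃ s, 0 < f s x := by
        by_contra h
        push_neg at h
        have : ∀ s, f s x = 0 := fun s => le_antisymm (h s) (hrange s x).1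
        have : (∑' s, ENNReal.ofReal (f s x)) = 0 := by
          simp [this]
        exact absurd this (ne_of_gt (hpos x))
      obtain ⟨s₀, hs₀⟩ := hex
      -- lower bound claim by well-founded induction
      have claim_lb : ∀ s : S, ∀ ε : ℝ, 0 < ε → ∃ F : Finset S,
          (∀ u ∈ F, u ≤ s) ∧ M s x + g s x - ε ≤ ∑ u ∈ F, g u x := by
        intro s
        induction s using WellFoundedLT.induction with
        | _ s IH =>
          intro ε hε
          by_cases hne : Nonempty {t : S // t < s}
          · have hlt : M s x - ε / 2 < M s x := by linarith
            obtain ⟨t, ht⟩ := exists_lt_of_lt_ciSup hlt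
            obtain ⟨F', hF'le, hF'sum⟩ := IH t.1 t.2 (ε / 2) (by linarith)
            have hfle : f t.1 x ≤ M t.1 x + g t.1 x := by
              rw [add_comm, hkey]; exact le_max_right _ _
            have hsnot : s ∉ F' := by
              intro h
              exact absurd ((hF'le s h).trans_lt t.2) (lt_irrefl s)
            refine ⟨insert s F', ?_, ?_⟩
            · intro u hu
              rcases Finset.mem_insert.1 hu with rfl | hu
              · exact le_rfl
              · exact (hF'le u hu).trans t.2.le
            · rw [Finset.sum_insert hsnot]
              have h1 : M t.1 x + g t.1 x - ε / 2 ≤ ∑ u ∈ F', g u x := hF'sum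
              have h2 : M s x - ε / 2 < f t.1 x := ht
              linarith
          · have : IsEmpty {t : S // t < s} := not_nonempty_iff.1 hne
            have hMz : M s x = 0 := Real.iSup_of_isEmpty _
            refine ⟨{s}, by simp, ?_⟩
            rw [Finset.sum_singleton, hMz]
            linarith
      -- conclude 0 < tsum
      have hge : f s₀ x ≤ ∑' s, g s x := by
        apply le_of_forall_sub_le
        intro ε hε
        obtain ⟨F, _, hFsum⟩ := claim_lb s₀ ε hε
        have h1 : f s₀ x ≤ M s₀ x + g s₀ x := by
          rw [add_comm, hkey]; exact le_max_right _ _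
        have h2 : ∑ u ∈ F, g u x ≤ ∑' s, g s x :=
          Summable.sum_le_tsum F (fun i _ => hg0 i x) (hsummable x)
        linarith
      linarith
    · exact Summable.tsum_le_of_sum_le (hsummable x) (hub x)
end

section
/- Suppose {f_s}_{s∈S} is a partition of a continuous function f : X → (0,∞). Then there exists a partition {f_n}_{n=1}^∞ of f by continuous functions and, for each n, a locally finite partition {f_s^n}_{s∈S} of f_n, such that for each s ∈ S the family {f_s^n}_{n=1}^∞ is a partition of f_s. -/
open Filter Topology

theorem stmt_10 {X : Type*} [TopologicalSpace X] {S : Type*}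
    (f : S → X → ℝ) (hcont : ∀ s, Continuous (f s)) (hnn : ∀ s x, 0 ≤ f s x)
    (F : X → ℝ) (hFc : Continuous F) (hFpos : ∀ x, 0 < F x)
    (hsum : ∀ x, HasSum (fun s => f s x) (F x)) :
    ∃ (fn : ℕ → X → ℝ) (g : ℕ → S → X → ℝ),
      (∀ n, Continuous (fn n)) ∧ (∀ n x, 0 ≤ fn n x) ∧
      (∀ n s, Continuous (g n s)) ∧ (∀ n s x, 0 ≤ g n s x) ∧
      (∀ x, HasSum (fun n => fn n x) (F x)) ∧
      (∀ n x, HasSum (fun s => g n s x) (fn n x)) ∧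
      (∀ n, ∀ x : X, ∃ U ∈ nhds x, {s : S | ∃ y ∈ U, g n s y ≠ 0}.Finite) ∧
      (∀ s x, HasSum (fun n => g n s x) (f s x)) := by
  classical
  -- dyadic bands
  set g : ℕ → S → X → ℝ := fun n s x =>
    max (f s x - (2⁻¹ : ℝ) ^ (n + 1)) 0 -
      (if n = 0 then 0 else max (f s x - (2⁻¹ : ℝ) ^ n) 0) with hg
  have hpow_le : ∀ n : ℕ, ((2⁻¹ : ℝ)) ^ (n + 1) ≤ (2⁻¹ : ℝ) ^ n := fun n =>
    pow_le_pow_of_le_one (by norm_num) (by norm_num) (Nat.le_succ n)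
  have hmax_mono : ∀ (a b c : ℝ), a ≤ b → max (c - b) 0 ≤ max (c - a) 0 := by
    intro a b c hab
    exact max_le_max (by linarith) le_rfl
  have hg_nonneg : ∀ n s x, 0 ≤ g n s x := by
    intro n s x
    rcases Nat.eq_zero_or_pos n with h | h
    · simp [hg, h, le_max_right]
    · have : n ≠ 0 := h.ne'
      simp only [hg, this, if_false]
      have := hmax_mono ((2⁻¹ : ℝ) ^ (n + 1)) ((2⁻¹ : ℝ) ^ n) (f s x) (hpow_le n)
      linarith
  have hg_cont : ∀ n s, Continuous (g n s) := by
    intro n s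
    rcases Nat.eq_zero_or_pos n with h | h
    · simp only [hg, h, if_true]
      exact (((hcont s).sub continuous_const).max continuous_const).sub continuous_const
    · have : n ≠ 0 := h.ne'
      simp only [hg, this, if_false]
      exact (((hcont s).sub continuous_const).max continuous_const).sub
        (((hcont s).sub continuous_const).max continuous_const)
  -- if f s x is small, the band vanishes
  have hg_ne : ∀ n s x, g n s x ≠ 0 → (2⁻¹ : ℝ) ^ (n + 1) < f s x := by
    intro n s x h
    by_contra hle
    push_neg at hle
    have h1 : max (f s x - (2⁻¹ : ℝ) ^ (n + 1)) 0 = 0 := max_eq_right (by linarith)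
    have h2 : (if n = 0 then (0:ℝ) else max (f s x - (2⁻¹ : ℝ) ^ n) 0) = 0 := by
      rcases Nat.eq_zero_or_pos n with h' | h'
      · simp [h']
      · have hn : n ≠ 0 := h'.ne'
        have := hpow_le n
        simp only [hn, if_false]
        exact max_eq_right (by linarith)
    exact h (by simp only [hg]; rw [h1, h2, sub_zero])
  -- partial sums telescope
  have hg_partial : ∀ s x N, ∑ i ∈ Finset.range (N + 1), g i s x =
      max (f s x - (2⁻¹ : ℝ) ^ (N + 1)) 0 := by
    intro s x N
    induction N with
    | zero => simp [hg]
    | succ N ih =>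
        rw [Finset.sum_range_succ, ih]
        have hN : N + 1 ≠ 0 := Nat.succ_ne_zero N
        simp only [hg, hN, if_false]
        ring
  -- each column sums to f s x
  have hg_hasSum : ∀ s x, HasSum (fun n => g n s x) (f s x) := by
    intro s x
    rw [hasSum_iff_tendsto_nat_of_nonneg (fun n => hg_nonneg n s x)]
    have h0 : Tendsto (fun n : ℕ => max (f s x - (2⁻¹ : ℝ) ^ n) 0) atTop
        (𝓝 (max (f s x - 0) 0)) := by
      exact (tendsto_const_nhds.sub
        (tendsto_pow_atTop_nhds_zero_of_lt_one (by norm_num) (by norm_num))).max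
        tendsto_const_nhds
    have h1 : max (f s x - 0) 0 = f s x := by
      rw [sub_zero]; exact max_eq_left (hnn s x)
    rw [h1] at h0
    refine h0.congr' ?_
    filter_upwards [eventually_ge_atTop 1] with n hn
    obtain ⟨m, rfl⟩ := Nat.exists_eq_add_of_le hn
    rw [add_comm 1 m]
    exact (hg_partial s x m).symm
  -- local finiteness
  have hLF : ∀ n (x : X), ∃ U ∈ 𝓝 x, {s : S | ∃ y ∈ U, g n s y ≠ 0}.Finite := by
    intro n x
    set ε : ℝ := (2⁻¹ : ℝ) ^ (n + 1) with hε
    have hεpos : 0 < ε := by positivity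
    have hev : ∀ᶠ T : Finset S in atTop, F x - ε < ∑ s ∈ T, f s x :=
      (hsum x).eventually (eventually_gt_nhds (by linarith))
    obtain ⟨T, hT⟩ := hev.exists
    set U : Set X := {y | F y - ∑ s ∈ T, f s y < ε} with hU
    have hUopen : IsOpen U := by
      have : Continuous fun y => F y - ∑ s ∈ T, f s y :=
        hFc.sub (continuous_finset_sum T fun s _ => hcont s)
      exact isOpen_lt this continuous_const
    have hxU : x ∈ U := by simp only [hU, Set.mem_setOf_eq]; linarith
    refine ⟨U, hUopen.mem_nhds hxU, T.finite_toSet.subset ?_⟩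
    rintro s ⟨y, hyU, hne⟩
    by_contra hsT
    have hfs : ε < f s y := hg_ne n s y hne
    have hle : ∑ i ∈ insert s T, f i y ≤ F y :=
      sum_le_hasSum _ (fun i _ => hnn i y) (hsum y)
    rw [Finset.sum_insert hsT] at hle
    have : F y - ∑ i ∈ T, f i y < ε := hyU
    linarith
  -- pointwise summability over s
  have hgs : ∀ n x, Summable (fun s => g n s x) := by
    intro n x
    obtain ⟨U, hU, hfin⟩ := hLF n x
    refine summable_of_ne_finset_zero (s := hfin.toFinset) ?_
    intro s hs
    by_contra h
    exact hs (hfin.mem_toFinset.mpr ⟨x, mem_of_mem_nhds hU, h⟩)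
  set fn : ℕ → X → ℝ := fun n x => ∑' s, g n s x with hfn
  have hfn_hasSum : ∀ n x, HasSum (fun s => g n s x) (fn n x) := fun n x => (hgs n x).hasSum
  have hfn_nonneg : ∀ n x, 0 ≤ fn n x := fun n x => tsum_nonneg fun s => hg_nonneg n s x
  have hfn_cont : ∀ n, Continuous (fn n) := by
    intro n
    rw [continuous_iff_continuousAt]
    intro x
    obtain ⟨U, hU, hfin⟩ := hLF n x
    have heq : ∀ y ∈ U, fn n y = ∑ s ∈ hfin.toFinset, g n s y := by
      intro y hy
      refine tsum_eq_sum ?_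
      intro s hs
      by_contra h
      exact hs (hfin.mem_toFinset.mpr ⟨y, hy, h⟩)
    have hc : ContinuousAt (fun y => ∑ s ∈ hfin.toFinset, g n s y) x :=
      (continuous_finset_sum _ fun s _ => hg_cont n s).continuousAt
    refine hc.congr ?_
    filter_upwards [hU] with y hy
    exact (heq y hy).symm
  -- summability of the double family (S × ℕ order)
  have hdouble : ∀ x : X, Summable (fun p : S × ℕ => g p.2 p.1 x) := by
    intro x
    rw [summable_prod_of_nonneg (fun p => hg_nonneg p.2 p.1 x)]
    constructor
    · intro s; exact (hg_hasSum s x).summable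
    · refine Summable.congr (hsum x).summable ?_
      intro s
      exact ((hg_hasSum s x).tsum_eq).symm
  have hF' : ∀ x, HasSum (fun n => fn n x) (F x) := by
    intro x
    have h1 : HasSum (fun p : S × ℕ => g p.2 p.1 x) (∑' p : S × ℕ, g p.2 p.1 x) :=
      (hdouble x).hasSum
    have h2 : HasSum (fun s => f s x) (∑' p : S × ℕ, g p.2 p.1 x) :=
      h1.prod_fiberwise fun s => hg_hasSum s x
    have h3 : (∑' p : S × ℕ, g p.2 p.1 x) = F x := h2.unique (hsum x)
    rw [h3] at h1
    have h4 : HasSum (fun p : ℕ × S => g p.1 p.2 x) (F x) := by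
      rw [← (Equiv.prodComm S ℕ).hasSum_iff]
      exact h1
    exact h4.prod_fiberwise fun n => hfn_hasSum n x
  exact ⟨fn, g, hfn_cont, hfn_nonneg, hg_cont, hg_nonneg, hF', hfn_hasSum, hLF, hg_hasSum⟩
end

section
/- Let {f_s}_{s∈S} be a partition of unity on a topological space X. Define, for each nonempty finite T ⊆ S, g_T := min_{t∈T} f_t − sup_{t∈S∖T} f_t and f'_T := |T| · max(0, g_T). Then: (1) each f'_T is continuous; (2) if f'_T(x) > 0 and f'_F(x) > 0 for some x, then T ⊆ F or F ⊆ T; (3) for each s ∈ S and x ∈ X, f_s(x) = ∑_{T ∋ s} f'_T(x)/|T|; (4) {f'_T}_{T⊆S finite, T≠∅} is itself a partition of unity on X. -/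
open Set MeasureTheory Filter

section Aux

variable {S : Type*} {a : S → ℝ}

/-- The sup of `a` over the complement of `T`. -/
noncomputable def csupC (a : S → ℝ) (T : Finset S) : ℝ := ⨆ t : {t : S // t ∉ T}, a t.1

lemma bddC (ha1 : ∀ t, a t ≤ 1) (T : Finset S) :
    BddAbove (Set.range fun t : {t : S // t ∉ T} => a t.1) := by
  refine ⟨1, ?_⟩; rintro y ⟨t, rfl⟩; exact ha1 t.1

lemma le_csupC (ha1 : ∀ t, a t ≤ 1) {T : Finset S} {t : S} (ht : t ∉ T) : a t ≤ csupC a T :=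
  le_ciSup (bddC ha1 T) ⟨t, ht⟩

lemma csupC_nonneg (ha0 : ∀ t, 0 ≤ a t) (T : Finset S) : 0 ≤ csupC a T :=
  Real.iSup_nonneg fun t => ha0 t.1

lemma csupC_le {T : Finset S} {c : ℝ} (hc : 0 ≤ c) (h : ∀ t ∉ T, a t ≤ c) : csupC a T ≤ c :=
  Real.iSup_le (fun t => h t.1 t.2) hc

/-- The interval attached to a nonempty finite set `T`. -/
noncomputable def ivl (a : S → ℝ) (T : Finset S) (hT : T.Nonempty) : Set ℝ :=
  Set.Ico (csupC a T) (T.inf' hT a)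

lemma lt_of_mem_ivl (ha1 : ∀ t, a t ≤ 1) {T : Finset S} {hT : T.Nonempty} {c : ℝ}
    (hc : c ∈ ivl a T hT) {t : S} (ht : t ∈ T) : c < a t :=
  lt_of_lt_of_le hc.2 (Finset.inf'_le a ht)

lemma le_of_mem_ivl (ha1 : ∀ t, a t ≤ 1) {T : Finset S} {hT : T.Nonempty} {c : ℝ}
    (hc : c ∈ ivl a T hT) {t : S} (ht : t ∉ T) : a t ≤ c :=
  le_trans (le_csupC ha1 ht) hc.1

lemma eq_of_mem_ivl (ha1 : ∀ t, a t ≤ 1) {T F : Finset S} {hT : T.Nonempty} {hF : F.Nonempty}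
    {c : ℝ} (hcT : c ∈ ivl a T hT) (hcF : c ∈ ivl a F hF) : T = F := by
  ext t
  constructor
  · intro ht
    by_contra htF
    exact absurd (lt_of_lt_of_le (lt_of_mem_ivl ha1 hcT ht) (le_of_mem_ivl ha1 hcF htF))
      (lt_irrefl c)
  · intro ht
    by_contra htT
    exact absurd (lt_of_lt_of_le (lt_of_mem_ivl ha1 hcF ht) (le_of_mem_ivl ha1 hcT htT))
      (lt_irrefl c)

lemma mem_ivl (ha1 : ∀ t, a t ≤ 1) {T : Finset S} (hT : T.Nonempty) {c : ℝ} (hc : 0 ≤ c)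
    (h1 : ∀ t ∈ T, c < a t) (h2 : ∀ t ∉ T, a t ≤ c) : c ∈ ivl a T hT :=
  ⟨csupC_le hc h2, (Finset.lt_inf'_iff hT).mpr h1⟩

lemma levelFinite (hsum : Summable a) {δ : ℝ} (hδ : 0 < δ) : {t : S | δ ≤ a t}.Finite := by
  have h := hsum.tendsto_cofinite_zero (Iio_mem_nhds hδ)
  have : {t : S | δ ≤ a t} ⊆ (a ⁻¹' Set.Iio δ)ᶜ := by
    intro t ht
    simp only [Set.mem_compl_iff, Set.mem_preimage, Set.mem_Iio, not_lt]
    exact ht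
  exact Set.Finite.subset h this

lemma key3 (ha0 : ∀ t, 0 ≤ a t) (ha1 : ∀ t, a t ≤ 1) (hsum : HasSum a 1) (s : S) :
    HasSum (fun T : {T : Finset S // s ∈ T} =>
      max (T.1.inf' ⟨s, T.2⟩ a - csupC a T.1) 0) (a s) := by
  classical
  set len : {T : Finset S // s ∈ T} → ℝ :=
    fun T => max (T.1.inf' ⟨s, T.2⟩ a - csupC a T.1) 0 with hlen
  set I : {T : Finset S // s ∈ T} → Set ℝ := fun T => ivl a T.1 ⟨s, T.2⟩ with hI
  have hvol : ∀ T, len T = (volume (I T)).toReal := by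
    intro T
    rw [hI, hlen]
    simp only [ivl, Real.volume_Ico, ENNReal.toReal_ofReal']
  have hvolne : ∀ T, volume (I T) ≠ ⊤ := by
    intro T
    simp only [hI, ivl, Real.volume_Ico]
    exact ENNReal.ofReal_ne_top
  -- equality of partial sums with measure of finite unions
  have hmeas : ∀ P : Finset {T : Finset S // s ∈ T},
      volume (⋃ T ∈ P, I T) = ∑ T ∈ P, volume (I T) := by
    intro P
    refine measure_biUnion_finset ?_ fun T _ => measurableSet_Ico
    intro T _ F _ hne
    rw [Function.onFun]
    refine Set.disjoint_left.mpr fun c hcT hcF => hne ?_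
    exact Subtype.ext (eq_of_mem_ivl ha1 hcT hcF)
  have hsub : ∀ P : Finset {T : Finset S // s ∈ T},
      (⋃ T ∈ P, I T) ⊆ Set.Ico 0 (a s) := by
    intro P
    refine Set.iUnion₂_subset fun T _ => ?_
    exact Set.Ico_subset_Ico (csupC_nonneg ha0 T.1) (Finset.inf'_le a T.2)
  have hub : ∀ P : Finset {T : Finset S // s ∈ T}, ∑ T ∈ P, len T ≤ a s := by
    intro P
    have h1 : ∑ T ∈ P, len T = (volume (⋃ T ∈ P, I T)).toReal := by
      rw [hmeas P, ENNReal.toReal_sum fun T _ => hvolne T]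
      exact Finset.sum_congr rfl fun T _ => hvol T
    rw [h1]
    have h2 : volume (⋃ T ∈ P, I T) ≤ ENNReal.ofReal (a s) := by
      calc volume (⋃ T ∈ P, I T) ≤ volume (Set.Ico (0 : ℝ) (a s)) := measure_mono (hsub P)
        _ = ENNReal.ofReal (a s - 0) := Real.volume_Ico
        _ = ENNReal.ofReal (a s) := by rw [sub_zero]
    calc (volume (⋃ T ∈ P, I T)).toReal ≤ (ENNReal.ofReal (a s)).toReal :=
          ENNReal.toReal_mono ENNReal.ofReal_ne_top h2
      _ = a s := ENNReal.toReal_ofReal (ha0 s)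
  refine hasSum_of_isLUB_of_nonneg (a s) (fun T => le_max_right _ _) ?_
  constructor
  · rintro y ⟨P, rfl⟩
    exact hub P
  · intro b hb
    have hb' : ∀ P : Finset {T : Finset S // s ∈ T}, ∑ T ∈ P, len T ≤ b :=
      fun P => hb ⟨P, rfl⟩
    have hb0 : 0 ≤ b := by simpa using hb' ∅
    refine le_of_forall_pos_le_add fun δ hδ => ?_
    by_cases hcase : a s ≤ δ
    · linarith
    push_neg at hcase
    -- the finitely many candidate sets
    have hfin : {t : S | δ ≤ a t}.Finite := levelFinite hsum.summable hδ
    set Fδ : Finset S := hfin.toFinset with hFδ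
    set P : Finset {T : Finset S // s ∈ T} := Fδ.powerset.subtype (fun T => s ∈ T) with hP
    have hcover : Set.Ico δ (a s) ⊆ ⋃ T ∈ P, I T := by
      rintro c ⟨hc1, hc2⟩
      have hc0 : (0 : ℝ) ≤ c := le_trans hδ.le hc1
      set Tc : Finset S := Fδ.filter (fun t => c < a t) with hTc
      have hsTc : s ∈ Tc := Finset.mem_filter.mpr
        ⟨hfin.mem_toFinset.mpr (le_trans hc1 hc2.le), hc2⟩
      have hmem : c ∈ I ⟨Tc, hsTc⟩ := by
        refine mem_ivl ha1 _ hc0 ?_ ?_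
        · intro t ht
          exact (Finset.mem_filter.mp ht).2
        · intro t ht
          by_contra hlt
          push_neg at hlt
          exact ht (Finset.mem_filter.mpr
            ⟨hfin.mem_toFinset.mpr (le_trans hc1 hlt.le), hlt⟩)
      have hTcP : (⟨Tc, hsTc⟩ : {T : Finset S // s ∈ T}) ∈ P := by
        rw [hP, Finset.mem_subtype]
        exact Finset.mem_powerset.mpr (Finset.filter_subset _ _)
      exact Set.mem_biUnion hTcP hmem
    have hlow : a s - δ ≤ ∑ T ∈ P, len T := by
      have h1 : ENNReal.ofReal (a s - δ) ≤ volume (⋃ T ∈ P, I T) := by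
        calc ENNReal.ofReal (a s - δ) = volume (Set.Ico δ (a s)) := Real.volume_Ico.symm
          _ ≤ volume (⋃ T ∈ P, I T) := measure_mono hcover
      have h2 : volume (⋃ T ∈ P, I T) ≠ ⊤ := by
        rw [hmeas P]
        exact ENNReal.sum_ne_top.mpr fun T _ => hvolne T
      have h3 := ENNReal.toReal_mono h2 h1
      rw [ENNReal.toReal_ofReal (by linarith)] at h3
      have h4 : (volume (⋃ T ∈ P, I T)).toReal = ∑ T ∈ P, len T := by
        rw [hmeas P, ENNReal.toReal_sum fun T _ => hvolne T]
        exact Finset.sum_congr rfl fun T _ => (hvol T).symm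
      linarith [h4 ▸ h3]
    linarith [hb' P]

lemma key4 (ha0 : ∀ t, 0 ≤ a t) (ha1 : ∀ t, a t ≤ 1) (hsum : HasSum a 1) :
    HasSum (fun T : {T : Finset S // T.Nonempty} =>
      (T.1.card : ℝ) * max (T.1.inf' T.2 a - csupC a T.1) 0) 1 := by
  classical
  set F : (Σ s : S, {T : Finset S // s ∈ T}) → ℝ :=
    fun p => max (p.2.1.inf' ⟨p.1, p.2.2⟩ a - csupC a p.2.1) 0 with hF
  have hnn : ∀ p, 0 ≤ F p := fun p => le_max_right _ _
  have h3 : ∀ s, HasSum (fun T : {T : Finset S // s ∈ T} => F ⟨s, T⟩) (a s) :=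
    fun s => key3 ha0 ha1 hsum s
  have hsummable : Summable F := by
    rw [summable_sigma_of_nonneg hnn]
    refine ⟨fun s => (h3 s).summable, ?_⟩
    have heq : (fun s => ∑' T : {T : Finset S // s ∈ T}, F ⟨s, T⟩) = a :=
      funext fun s => (h3 s).tsum_eq
    rw [heq]
    exact hsum.summable
  have hFsum : HasSum F 1 := by
    have h1 : HasSum a (∑' p, F p) := HasSum.sigma hsummable.hasSum h3
    have h2 : (∑' p, F p) = 1 := h1.unique hsum
    exact h2 ▸ hsummable.hasSum
  let e : (Σ T : {T : Finset S // T.Nonempty}, {t : S // t ∈ T.1}) ≃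
      (Σ s : S, {T : Finset S // s ∈ T}) :=
    { toFun := fun q => ⟨q.2.1, ⟨q.1.1, q.2.2⟩⟩
      invFun := fun p => ⟨⟨p.2.1, ⟨p.1, p.2.2⟩⟩, ⟨p.1, p.2.2⟩⟩
      left_inv := fun q => rfl
      right_inv := fun p => rfl }
  have hG : HasSum (F ∘ e) 1 := e.hasSum_iff.mpr hFsum
  have hfib : ∀ T : {T : Finset S // T.Nonempty},
      HasSum (fun t : {t : S // t ∈ T.1} => (F ∘ e) ⟨T, t⟩)
        ((T.1.card : ℝ) * max (T.1.inf' T.2 a - csupC a T.1) 0) := by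
    intro T
    have h0 := hasSum_fintype
      (fun _ : {t : S // t ∈ T.1} => max (T.1.inf' T.2 a - csupC a T.1) 0)
    have heq : ∑ _t : {t : S // t ∈ T.1}, max (T.1.inf' T.2 a - csupC a T.1) 0
        = (T.1.card : ℝ) * max (T.1.inf' T.2 a - csupC a T.1) 0 := by
      rw [Finset.sum_const, Finset.card_univ, Fintype.card_coe, nsmul_eq_mul]
    rw [heq] at h0
    exact h0
  exact HasSum.sigma hG hfib

lemma supCont {X : Type*} [TopologicalSpace X] (f : S → X → ℝ)
    (hcont : ∀ s, Continuous (f s)) (hrange : ∀ s x, f s x ∈ Set.Icc (0 : ℝ) 1)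
    (hsum : ∀ x, HasSum (fun s => f s x) 1) (T : Finset S) :
    Continuous fun x => ⨆ t : {t : S // t ∉ T}, f t.1 x := by
  classical
  by_cases hne : Nonempty {t : S // t ∉ T}
  swap
  · have : IsEmpty {t : S // t ∉ T} := not_nonempty_iff.mp hne
    have heq : (fun x => ⨆ t : {t : S // t ∉ T}, f t.1 x) = fun _ => (0 : ℝ) :=
      funext fun x => Real.iSup_of_isEmpty _
    rw [heq]
    exact continuous_const
  obtain ⟨t₀, ht₀⟩ := hne
  rw [continuous_iff_continuousAt]
  intro x₀
  rw [ContinuousAt, Metric.tendsto_nhds]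
  intro ε hε
  set ε' := ε / 3 with hε'
  have hε'pos : 0 < ε' := by positivity
  -- choose a finite set capturing most of the mass at x₀
  have h1 : ∀ᶠ G : Finset S in atTop, 1 - ε' < ∑ t ∈ G, f t x₀ :=
    (hsum x₀).eventually (eventually_gt_nhds (by linarith))
  obtain ⟨G₀, hG₀⟩ := h1.exists
  set G : Finset S := insert t₀ G₀ with hG
  have hGsum : 1 - ε' < ∑ t ∈ G, f t x₀ := by
    refine lt_of_lt_of_le hG₀ ?_
    exact Finset.sum_le_sum_of_subset_of_nonneg (Finset.subset_insert _ _)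
      fun t _ _ => (hrange t x₀).1
  have ht₀G : t₀ ∈ G \ T := Finset.mem_sdiff.mpr ⟨Finset.mem_insert_self _ _, ht₀⟩
  have hGT : (G \ T).Nonempty := ⟨t₀, ht₀G⟩
  set φ : X → ℝ := fun x => (G \ T).sup' hGT fun t => f t x with hφ
  have hφcont : Continuous φ := Continuous.finset_sup'_apply hGT fun t _ => hcont t
  set U : Set X := {x | 1 - ε' < ∑ t ∈ G, f t x} with hU
  have hUopen : IsOpen U := isOpen_lt continuous_const (by fun_prop)
  have hx₀U : x₀ ∈ U := hGsum
  have hbdd : ∀ x, BddAbove (Set.range fun t : {t : S // t ∉ T} => f t.1 x) := by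
    intro x
    refine ⟨1, ?_⟩; rintro y ⟨t, rfl⟩; exact (hrange t.1 x).2
  -- key estimates on U
  have hφle : ∀ x, φ x ≤ ⨆ t : {t : S // t ∉ T}, f t.1 x := by
    intro x
    refine Finset.sup'_le hGT _ fun t ht => ?_
    exact le_ciSup (hbdd x) ⟨t, (Finset.mem_sdiff.mp ht).2⟩
  have hφ0 : ∀ x, 0 ≤ φ x := fun x =>
    le_trans (hrange t₀ x).1 (Finset.le_sup' (fun t => f t x) ht₀G)
  have hsmall : ∀ x ∈ U, ∀ t, t ∉ G → f t x ≤ ε' := by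
    intro x hx t ht
    have hsub := sum_le_hasSum (insert t G) (fun u _ => (hrange u x).1) (hsum x)
    rw [Finset.sum_insert ht] at hsub
    have hx' : 1 - ε' < ∑ u ∈ G, f u x := hx
    linarith
  have hsuple : ∀ x ∈ U, (⨆ t : {t : S // t ∉ T}, f t.1 x) ≤ φ x + ε' := by
    intro x hx
    refine Real.iSup_le (fun t => ?_) (by linarith [hφ0 x])
    by_cases htG : t.1 ∈ G
    · have : f t.1 x ≤ φ x := Finset.le_sup' (fun u => f u x) (Finset.mem_sdiff.mpr ⟨htG, t.2⟩)
      linarith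
    · have := hsmall x hx t.1 htG
      linarith [hφ0 x]
  -- assemble
  have hV : U ∩ {x | dist (φ x) (φ x₀) < ε'} ∈ nhds x₀ := by
    refine Filter.inter_mem (hUopen.mem_nhds hx₀U) ?_
    have : Continuous fun x => dist (φ x) (φ x₀) := (hφcont.dist continuous_const)
    exact (isOpen_lt this continuous_const).mem_nhds (by simp [hε'pos])
  refine Filter.mem_of_superset hV ?_
  rintro x ⟨hxU, hxφ⟩
  simp only [Set.mem_setOf_eq]
  rw [Real.dist_eq, abs_sub_lt_iff]
  rw [Set.mem_setOf_eq, Real.dist_eq, abs_sub_lt_iff] at hxφ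
  have e1 := hφle x
  have e2 := hsuple x hxU
  have e3 := hφle x₀
  have e4 := hsuple x₀ hx₀U
  constructor <;> [linarith; linarith]

end Aux

theorem stmt_11 {X : Type*} [TopologicalSpace X] {S : Type*}
    (f : S → X → ℝ) (hcont : ∀ s, Continuous (f s))
    (hrange : ∀ s x, f s x ∈ Set.Icc (0 : ℝ) 1)
    (hsum : ∀ x, HasSum (fun s => f s x) 1)
    (f' : Finset S → X → ℝ)
    (hf' : ∀ (T : Finset S) (hT : T.Nonempty) (x : X),
      f' T x = T.card *
        max (T.inf' hT (fun t => f t x) - ⨆ t : {t : S // t ∉ T}, f t.1 x) 0) :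
    (∀ T : Finset S, T.Nonempty → Continuous (f' T)) ∧
    (∀ T F : Finset S, T.Nonempty → F.Nonempty → ∀ x : X,
      0 < f' T x → 0 < f' F x → T ⊆ F ∨ F ⊆ T) ∧
    (∀ s : S, ∀ x : X,
      HasSum (fun T : {T : Finset S // s ∈ T} => f' T.1 x / T.1.card) (f s x)) ∧
    (∀ x : X, HasSum (fun T : {T : Finset S // T.Nonempty} => f' T.1 x) 1) := by
  have ha0 : ∀ x : X, ∀ t, 0 ≤ f t x := fun x t => (hrange t x).1
  have ha1 : ∀ x : X, ∀ t, f t x ≤ 1 := fun x t => (hrange t x).2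
  refine ⟨?_, ?_, ?_, ?_⟩
  · -- continuity
    intro T hT
    have heq : f' T = fun x => (T.card : ℝ) *
        max (T.inf' hT (fun t => f t x) - ⨆ t : {t : S // t ∉ T}, f t.1 x) 0 :=
      funext (hf' T hT)
    rw [heq]
    refine continuous_const.mul (Continuous.max ?_ continuous_const)
    exact (Continuous.finset_inf'_apply hT fun t _ => hcont t).sub
      (supCont f hcont hrange hsum T)
  · -- chain condition
    intro T F hT hF x hT' hF'
    have key : ∀ (E : Finset S) (hE : E.Nonempty), 0 < f' E x →
        csupC (fun t => f t x) E < E.inf' hE (fun t => f t x) := by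
      intro E hE hpos
      rw [hf' E hE x] at hpos
      have hcs : csupC (fun t => f t x) E = ⨆ t : {t : S // t ∉ E}, f t.1 x := rfl
      rw [← hcs] at hpos
      by_contra hle
      push_neg at hle
      rw [max_eq_right (by linarith)] at hpos
      simp at hpos
    have hTpos := key T hT hT'
    have hFpos := key F hF hF'
    by_contra hcon
    push_neg at hcon
    obtain ⟨hTF, hFT⟩ := hcon
    obtain ⟨t, htT, htF⟩ := Finset.not_subset.mp hTF
    obtain ⟨u, huF, huT⟩ := Finset.not_subset.mp hFT
    have h1 : T.inf' hT (fun t => f t x) ≤ f t x := Finset.inf'_le _ htT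
    have h2 : f t x ≤ csupC (fun t => f t x) F := le_csupC (ha1 x) htF
    have h3 : F.inf' hF (fun t => f t x) ≤ f u x := Finset.inf'_le _ huF
    have h4 : f u x ≤ csupC (fun t => f t x) T := le_csupC (ha1 x) huT
    linarith
  · -- fiberwise sums
    intro s x
    have h := key3 (a := fun t => f t x) (ha0 x) (ha1 x) (hsum x) s
    have heq : (fun T : {T : Finset S // s ∈ T} => f' T.1 x / T.1.card)
        = fun T : {T : Finset S // s ∈ T} =>
            max (T.1.inf' ⟨s, T.2⟩ (fun t => f t x) - csupC (fun t => f t x) T.1) 0 := by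
      funext T
      rw [hf' T.1 ⟨s, T.2⟩ x]
      have hcard : (T.1.card : ℝ) ≠ 0 :=
        Nat.cast_ne_zero.mpr (Finset.card_pos.mpr ⟨s, T.2⟩).ne'
      rw [mul_div_cancel_left₀ _ hcard]
      rfl
    rw [heq]
    exact h
  · -- total sum
    intro x
    have h := key4 (a := fun t => f t x) (ha0 x) (ha1 x) (hsum x)
    have heq : (fun T : {T : Finset S // T.Nonempty} => f' T.1 x)
        = fun T : {T : Finset S // T.Nonempty} => (T.1.card : ℝ) *
            max (T.1.inf' T.2 (fun t => f t x) - csupC (fun t => f t x) T.1) 0 := by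
      funext T
      rw [hf' T.1 T.2 x]
      rfl
    rw [heq]
    exact h
end

section
/- Let {f_s}_{s∈S} be a partition of unity on X with derivative {f'_T}_{T⊆S}. Define open covers 𝒰 = {U_T}, U_T := (f'_T)^{-1}(0,1], and 𝒱 = {V_s}, V_s := f_s^{-1}(0,1]. Then for every x ∈ X there exists s ∈ S such that the union of all U_T containing x is contained in V_s (i.e., stars of 𝒰 at points refine 𝒱). -/
theorem stmt_12 {X : Type*} [TopologicalSpace X] {S : Type*}
    (f : S → X → ℝ) (hcont : ∀ s, Continuous (f s))
    (hrange : ∀ s x, f s x ∈ Set.Icc (0 : ℝ) 1)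
    (hsum : ∀ x, HasSum (fun s => f s x) 1)
    (f' : Finset S → X → ℝ)
    (hf' : ∀ (T : Finset S) (hT : T.Nonempty) (x : X),
      f' T x = T.card *
        max (T.inf' hT (fun t => f t x) - ⨆ t : {t : S // t ∉ T}, f t.1 x) 0) :
    ∀ x : X, ∃ s : S, ∀ T : Finset S, T.Nonempty →
      0 < f' T x → ∀ y : X, 0 < f' T y → 0 < f s y := by
  intro x
  -- find some s0 with f s0 x > 0
  obtain ⟨s0, hs0⟩ : ∃ s, 0 < f s x := by
    by_contra h
    push_neg at h
    have hz : ∀ s, f s x = 0 := fun s => le_antisymm (h s) (hrange s x).1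
    have : (1 : ℝ) = 0 := (hsum x).unique (by simpa [hz] using hasSum_zero)
    norm_num at this
  -- the set of t with f t x ≥ f s0 x is finite
  have hfin : {t : S | f s0 x ≤ f t x}.Finite := by
    have h1 := (hsum x).summable.tendsto_cofinite_zero
    have h2 : ∀ᶠ t in Filter.cofinite, f t x < f s0 x :=
      h1.eventually (gt_mem_nhds hs0)
    simpa [Filter.eventually_cofinite, not_lt] using h2
  -- pick a global maximizer s
  obtain ⟨s, hsF, hmax⟩ := Finset.exists_max_image hfin.toFinset (fun t => f t x)
    ⟨s0, by simp⟩
  have hglob : ∀ t, f t x ≤ f s x := by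
    intro t
    by_cases h : f s0 x ≤ f t x
    · exact hmax t (by simpa using h)
    · exact le_trans (le_of_lt (not_le.mp h)) (hmax s0 (by simp))
  refine ⟨s, fun T hT hTx y hTy => ?_⟩
  -- extract strict inequalities from f' > 0
  have key : ∀ z : X, 0 < f' T z →
      (⨆ t : {t : S // t ∉ T}, f t.1 z) < T.inf' hT (fun t => f t z) := by
    intro z hz
    rw [hf' T hT z] at hz
    by_contra h
    push_neg at h
    have hmle : max (T.inf' hT (fun t => f t z) - ⨆ t : {t : S // t ∉ T}, f t.1 z) 0 = 0 :=
      max_eq_right (by linarith)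
    rw [hmle, mul_zero] at hz
    exact lt_irrefl _ hz
  have hbdd : ∀ z : X, BddAbove (Set.range fun t : {t : S // t ∉ T} => f t.1 z) := by
    intro z
    exact ⟨1, by rintro _ ⟨t, rfl⟩; exact (hrange t.1 z).2⟩
  -- s ∈ T
  have hsT : s ∈ T := by
    by_contra hsT
    have h1 : f s x ≤ ⨆ t : {t : S // t ∉ T}, f t.1 x :=
      le_ciSup (hbdd x) ⟨s, hsT⟩
    obtain ⟨t0, ht0⟩ := id hT
    have h2 : T.inf' hT (fun t => f t x) ≤ f t0 x := Finset.inf'_le _ ht0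
    have h3 := key x hTx
    have h4 := hglob t0
    linarith
  -- conclude for y
  have h5 := key y hTy
  have h6 : T.inf' hT (fun t => f t y) ≤ f s y := Finset.inf'_le _ hsT
  have h7 : 0 ≤ ⨆ t : {t : S // t ∉ T}, f t.1 y := by
    by_cases hne : Nonempty {t : S // t ∉ T}
    · obtain ⟨t⟩ := hne
      exact le_trans (hrange t.1 y).1 (le_ciSup (hbdd y) t)
    · haveI := not_nonempty_iff.mp hne
      rw [Real.iSup_of_isEmpty]
  linarith
end

section
/- Let {f_s}_{s∈S} be a partition of unity on a space X with derivative {f'_T}_{T⊆S}. Then the order of {f_s}_{s∈S} is at most n (i.e., for each x ∈ X at most n+1 of the values f_s(x) are positive) if and only if f'_T ≡ 0 for every finite subset T of S with at least n+2 elements. -/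
theorem stmt_13 {X : Type*} [TopologicalSpace X] {S : Type*} (n : ℕ)
    (f : S → X → ℝ) (hcont : ∀ s, Continuous (f s))
    (hrange : ∀ s x, f s x ∈ Set.Icc (0 : ℝ) 1)
    (hsum : ∀ x, HasSum (fun s => f s x) 1)
    (f' : Finset S → X → ℝ)
    (hf' : ∀ (T : Finset S) (hT : T.Nonempty) (x : X),
      f' T x = T.card *
        max (T.inf' hT (fun t => f t x) - ⨆ t : {t : S // t ∉ T}, f t.1 x) 0) :
    (∀ x : X, ∀ T : Finset S, (∀ s ∈ T, 0 < f s x) → T.card ≤ n + 1) ↔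
    (∀ T : Finset S, T.Nonempty → n + 2 ≤ T.card → ∀ x : X, f' T x = 0) := by
  classical
  constructor
  · intro h T hT hcard x
    rw [hf' T hT x]
    have hsup0 : 0 ≤ ⨆ t : {t : S // t ∉ T}, f t.1 x := by
      rcases isEmpty_or_nonempty {t : S // t ∉ T} with he | hne
      · simp [Real.iSup_of_isEmpty]
      · obtain ⟨t⟩ := hne
        have hb : BddAbove (Set.range fun t : {t : S // t ∉ T} => f t.1 x) := by
          refine ⟨1, ?_⟩; rintro y ⟨u, rfl⟩; exact (hrange u.1 x).2
        exact le_trans (hrange t.1 x).1 (le_ciSup hb t)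
    have hinf : T.inf' hT (fun t => f t x) ≤ 0 := by
      by_contra hlt
      push_neg at hlt
      have := h x T (fun s hs => lt_of_lt_of_le hlt (Finset.inf'_le _ hs))
      omega
    have hle : T.inf' hT (fun t => f t x) - (⨆ t : {t : S // t ∉ T}, f t.1 x) ≤ 0 := by
      linarith
    rw [max_eq_right hle, mul_zero]
  · intro h x T hpos
    by_contra hcard
    push_neg at hcard
    have hT : T.Nonempty := Finset.card_pos.mp (by omega)
    set m := T.inf' hT (fun t => f t x) with hm
    have hm0 : 0 < m := (Finset.lt_inf'_iff hT).mpr fun t ht => hpos t ht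
    have h1 : (1:ℝ) - m/2 < 1 := by linarith
    obtain ⟨A, hA⟩ := ((hsum x).eventually (eventually_gt_nhds h1)).exists
    have htail : ∀ s ∉ A, f s x < m/2 := by
      intro s hs
      have hle : ∑ t ∈ insert s A, f t x ≤ 1 :=
        sum_le_hasSum _ (fun i _ => (hrange i x).1) (hsum x)
      rw [Finset.sum_insert hs] at hle
      linarith
    set A' := A.filter (fun s => m ≤ f s x) with hA'
    have hTA : T ⊆ A' := by
      intro t ht
      have hmt : m ≤ f t x := Finset.inf'_le _ ht
      have htA : t ∈ A := by
        by_contra hn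
        have := htail t hn
        linarith
      exact Finset.mem_filter.mpr ⟨htA, hmt⟩
    have hA'ne : A'.Nonempty := hT.mono hTA
    have hcardA' : n + 2 ≤ A'.card := le_trans (by omega) (Finset.card_le_card hTA)
    have h0 := h A' hA'ne hcardA' x
    rw [hf' A' hA'ne x] at h0
    have hmax : max (A'.inf' hA'ne (fun t => f t x) -
        ⨆ t : {t : S // t ∉ A'}, f t.1 x) 0 = 0 := by
      rcases mul_eq_zero.mp h0 with h' | h'
      · exfalso
        have : A'.card ≠ 0 := Finset.card_ne_zero.mpr hA'ne
        exact this (Nat.cast_injective (h'.trans (Nat.cast_zero).symm))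
      · exact h'
    have hinfsup : A'.inf' hA'ne (fun t => f t x) ≤
        ⨆ t : {t : S // t ∉ A'}, f t.1 x := by
      have := max_eq_right_iff.mp hmax
      linarith
    have hinfm : m ≤ A'.inf' hA'ne (fun t => f t x) :=
      Finset.le_inf' _ _ fun t ht => (Finset.mem_filter.mp ht).2
    rcases isEmpty_or_nonempty {t : S // t ∉ A'} with he | hne
    · have hz : (⨆ t : {t : S // t ∉ A'}, f t.1 x) = 0 := Real.iSup_of_isEmpty _
      rw [hz] at hinfsup
      linarith
    · set F := A \ A' with hF
      set c := (insert (m/2) (F.image (fun s => f s x))).max'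
        (Finset.insert_nonempty _ _) with hc
      have hclt : c < m := by
        rw [hc, Finset.max'_lt_iff]
        intro y hy
        rcases Finset.mem_insert.mp hy with rfl | hy
        · linarith
        · obtain ⟨s, hs, rfl⟩ := Finset.mem_image.mp hy
          have hsd := Finset.mem_sdiff.mp hs
          have hnm : ¬ m ≤ f s x := fun hcc => hsd.2 (Finset.mem_filter.mpr ⟨hsd.1, hcc⟩)
          linarith
      have hsupc : (⨆ t : {t : S // t ∉ A'}, f t.1 x) ≤ c := by
        have hc0 : (0:ℝ) ≤ c := le_trans (by linarith)
          (Finset.le_max' (insert (m/2) (F.image (fun s => f s x))) _ (Finset.mem_insert_self _ _))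
        refine Real.iSup_le ?_ hc0
        rintro ⟨s, hs⟩
        by_cases hsA : s ∈ A
        · exact Finset.le_max' (insert (m/2) (F.image (fun s => f s x))) _ (Finset.mem_insert_of_mem
            (Finset.mem_image_of_mem _ (Finset.mem_sdiff.mpr ⟨hsA, hs⟩)))
        · exact le_trans (le_of_lt (htail s hsA))
            (Finset.le_max' (insert (m/2) (F.image (fun s => f s x))) _ (Finset.mem_insert_self _ _))
      linarith
end

section
/- Let f = {f_s}_{s∈S} be a partition of unity on a metrizable space X with derivative {f'_T}. For fixed integers m, n ≥ 1, the family of sets U_{T,m} := {x ∈ X : f'_T(x) > 1/m}, where T ranges over subsets of S with exactly n elements, is discrete: every point of X has a neighborhood meeting at most one of these sets. Consequently, every open cover of a metrizable space has a σ-discrete open refinement. -/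
open Topology Set Function

noncomputable def fDeriv14 {X S : Type*} (f : S → X → ℝ) (T : Finset S) (y : X) : ℝ :=
  if h : T.Nonempty then
    T.card * max (T.inf' h (fun t => f t y) - ⨆ t : {t : S // t ∉ T}, f t.1 y) 0
  else 0

theorem key14 {X S : Type*} [TopologicalSpace X] (m n : ℕ) (hm : 1 ≤ m) (hn : 1 ≤ n)
    (f : S → X → ℝ) (hcont : ∀ s, Continuous (f s))
    (hrange : ∀ s x, f s x ∈ Set.Icc (0 : ℝ) 1)
    (hsum : ∀ x, HasSum (fun s => f s x) 1) (x : X) :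
    ∃ U ∈ 𝓝 x, ∀ T₁ T₂ : Finset S, T₁.card = n → T₂.card = n →
      (∃ y ∈ U, 1 / (m : ℝ) < fDeriv14 f T₁ y) → (∃ y ∈ U, 1 / (m : ℝ) < fDeriv14 f T₂ y) →
      T₁ = T₂ := by
  have hm0 : (0:ℝ) < m := by exact_mod_cast hm
  have hn0 : (0:ℝ) < n := by exact_mod_cast hn
  set ε : ℝ := 1 / (4 * m * n) with hεdef
  have hε : 0 < ε := by positivity
  obtain ⟨F, hF⟩ : ∃ F : Finset S, 1 - ε < ∑ t ∈ F, f t x :=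
    ((hsum x).eventually (eventually_gt_nhds (by linarith))).exists
  set U : Set X := {y | 1 - ε < ∑ t ∈ F, f t y} ∩ ⋂ t ∈ F, {y | |f t y - f t x| < ε} with hUdef
  have hUopen : IsOpen U := by
    apply IsOpen.inter
    · exact isOpen_lt continuous_const (continuous_finset_sum F fun t _ => hcont t)
    · exact isOpen_biInter_finset fun t _ =>
        isOpen_lt (((hcont t).sub continuous_const).abs) continuous_const
  have hxU : x ∈ U := by
    refine ⟨hF, ?_⟩
    simp only [Set.mem_iInter, Set.mem_setOf_eq]
    intro t _
    simpa using hε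
  have claim : ∀ y ∈ U, ∀ T : Finset S, T.card = n → 1 / (m : ℝ) < fDeriv14 f T y →
      T ⊆ F ∧ ∀ t ∈ T, ∀ s, s ∉ T → f s y + 4 * ε < f t y := by
    intro y hy T hTn hT
    classical
    have hTne : T.Nonempty := Finset.card_pos.mp (by omega)
    rw [fDeriv14, dif_pos hTne] at hT
    set I := T.inf' hTne (fun t => f t y) with hI
    set Sup := ⨆ t : {t : S // t ∉ T}, f t.1 y with hSup
    have hbdd : BddAbove (Set.range fun t : {t : S // t ∉ T} => f t.1 y) :=
      ⟨1, by rintro _ ⟨t, rfl⟩; exact (hrange _ y).2⟩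
    have hSup0 : 0 ≤ Sup := Real.iSup_nonneg fun t => (hrange _ y).1
    have hcard : (T.card : ℝ) = n := by exact_mod_cast hTn
    have hgap : Sup + 4 * ε < I := by
      have h4 : 4 * ε = 1 / ((m:ℝ) * n) := by
        rw [hεdef]; field_simp
      rcases le_or_gt (I - Sup) 0 with h | h
      · rw [max_eq_right h, mul_zero] at hT
        exact absurd hT (by positivity : (0:ℝ) ≤ 1 / m).not_gt
      · rw [max_eq_left h.le, hcard] at hT
        rw [div_lt_iff₀ hm0] at hT
        have h5 : 1 / ((m:ℝ) * n) < I - Sup := by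
          rw [div_lt_iff₀ (by positivity)]
          nlinarith
        linarith
    have hle : ∀ t ∈ T, I ≤ f t y := fun t ht => Finset.inf'_le _ ht
    have hsub : T ⊆ F := by
      intro t ht
      by_contra htF
      have h1 : ∑ s ∈ insert t F, f s y ≤ 1 :=
        sum_le_hasSum _ (fun s _ => (hrange s y).1) (hsum y)
      rw [Finset.sum_insert htF] at h1
      have h2 : f t y < ε := by
        have := hy.1
        simp only [Set.mem_setOf_eq] at this
        linarith
      have := hle t ht
      linarith
    refine ⟨hsub, fun t ht s hs => ?_⟩
    have h1 : f s y ≤ Sup := le_ciSup hbdd ⟨s, hs⟩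
    have := hle t ht
    linarith
  refine ⟨U, hUopen.mem_nhds hxU, ?_⟩
  rintro T₁ T₂ h₁ h₂ ⟨y₁, hy₁U, hy₁⟩ ⟨y₂, hy₂U, hy₂⟩
  by_contra hne
  obtain ⟨hs₁, hg₁⟩ := claim y₁ hy₁U T₁ h₁ hy₁
  obtain ⟨hs₂, hg₂⟩ := claim y₂ hy₂U T₂ h₂ hy₂
  obtain ⟨t₁, ht₁, ht₁'⟩ : ∃ t ∈ T₁, t ∉ T₂ := by
    by_contra h
    push_neg at h
    exact hne (Finset.eq_of_subset_of_card_le h (by omega))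
  obtain ⟨t₂, ht₂, ht₂'⟩ : ∃ t ∈ T₂, t ∉ T₁ := by
    by_contra h
    push_neg at h
    exact hne (Finset.eq_of_subset_of_card_le h (by omega)).symm
  have a1 := hg₁ t₁ ht₁ t₂ ht₂'
  have a2 := hg₂ t₂ ht₂ t₁ ht₁'
  have hmem : ∀ y ∈ U, ∀ t ∈ F, |f t y - f t x| < ε := by
    intro y hy t ht
    have := hy.2
    simp only [Set.mem_iInter, Set.mem_setOf_eq] at this
    exact this t ht
  have b1 := abs_lt.mp (hmem y₁ hy₁U t₁ (hs₁ ht₁))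
  have b2 := abs_lt.mp (hmem y₁ hy₁U t₂ (hs₂ ht₂))
  have b3 := abs_lt.mp (hmem y₂ hy₂U t₁ (hs₁ ht₁))
  have b4 := abs_lt.mp (hmem y₂ hy₂U t₂ (hs₂ ht₂))
  linarith [b1.1, b1.2, b2.1, b2.2, b3.1, b3.2, b4.1, b4.2, a1, a2]


theorem stmt_14 {X : Type*} [TopologicalSpace X] [TopologicalSpace.MetrizableSpace X]
    {S : Type*} (m n : ℕ) (hm : 1 ≤ m) (hn : 1 ≤ n)
    (f : S → X → ℝ) (hcont : ∀ s, Continuous (f s))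
    (hrange : ∀ s x, f s x ∈ Set.Icc (0 : ℝ) 1)
    (hsum : ∀ x, HasSum (fun s => f s x) 1)
    (f' : Finset S → X → ℝ)
    (hf' : ∀ (T : Finset S) (hT : T.Nonempty) (x : X),
      f' T x = T.card *
        max (T.inf' hT (fun t => f t x) - ⨆ t : {t : S // t ∉ T}, f t.1 x) 0) :
    (∀ x : X, ∃ U ∈ nhds x, ∀ T₁ T₂ : Finset S, T₁.card = n → T₂.card = n →
      (∃ y ∈ U, 1 / (m : ℝ) < f' T₁ y) → (∃ y ∈ U, 1 / (m : ℝ) < f' T₂ y) →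
      T₁ = T₂) ∧
    (∀ 𝒞 : Set (Set X), (∀ c ∈ 𝒞, IsOpen c) → ⋃₀ 𝒞 = Set.univ →
      ∃ W : ℕ → Set (Set X),
        (∀ k, ∀ w ∈ W k, IsOpen w) ∧
        (∀ k, ∀ x : X, ∃ U ∈ nhds x, ∀ w₁ ∈ W k, ∀ w₂ ∈ W k,
          (U ∩ w₁).Nonempty → (U ∩ w₂).Nonempty → w₁ = w₂) ∧
        (⋃ k, ⋃₀ W k) = Set.univ ∧
        (∀ k, ∀ w ∈ W k, ∃ c ∈ 𝒞, w ⊆ c)) := by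
  constructor
  · -- Part 1
    intro x
    obtain ⟨U, hU, hkey⟩ := key14 m n hm hn f hcont hrange hsum x
    refine ⟨U, hU, ?_⟩
    intro T₁ T₂ h₁ h₂ ⟨y₁, hy₁, hv₁⟩ ⟨y₂, hy₂, hv₂⟩
    have hne₁ : T₁.Nonempty := Finset.card_pos.mp (by omega)
    have hne₂ : T₂.Nonempty := Finset.card_pos.mp (by omega)
    refine hkey T₁ T₂ h₁ h₂ ⟨y₁, hy₁, ?_⟩ ⟨y₂, hy₂, ?_⟩
    · rwa [fDeriv14, dif_pos hne₁, ← hf' T₁ hne₁ y₁]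
    · rwa [fDeriv14, dif_pos hne₂, ← hf' T₂ hne₂ y₂]
  · -- Part 2
    intro 𝒞 hopen hcover
    letI : MetricSpace X := TopologicalSpace.metrizableSpaceMetric X
    set ι := {c : Set X // c ∈ 𝒞} with hι
    have hcov' : (Set.univ : Set X) ⊆ ⋃ i : ι, (i : Set X) := by
      rw [← Set.sUnion_eq_iUnion, hcover]
    obtain ⟨p, hp⟩ := PartitionOfUnity.exists_isSubordinate isClosed_univ
      (fun i : ι => (i : Set X)) (fun i => hopen i i.2) hcov'
    set g : ι → X → ℝ := fun i y => p i y with hg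
    have hgcont : ∀ i, Continuous (g i) := fun i => (p i).continuous
    have hgrange : ∀ i y, g i y ∈ Set.Icc (0 : ℝ) 1 := fun i y => ⟨p.nonneg i y, p.le_one i y⟩
    have hgsum : ∀ y, HasSum (fun i => g i y) 1 := by
      intro y
      have hfin := p.locallyFinite.point_finite y
      have h1 : HasSum (fun i => g i y) (∑ i ∈ hfin.toFinset, g i y) := by
        apply hasSum_sum_of_ne_finset_zero
        intro i hi
        simpa [hg, Function.mem_support] using fun h => hi (hfin.mem_toFinset.mpr h)
      have h2 : ∑ i ∈ hfin.toFinset, g i y = 1 := by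
        show ∑ i ∈ hfin.toFinset, p i y = 1
        refine (finsum_eq_sum (fun i => p i y) hfin).symm.trans ?_
        exact p.sum_eq_one (Set.mem_univ y)
      rwa [h2] at h1
    classical
    set W : ℕ → Set (Set X) := fun k =>
      {w | ∃ T : Finset ι, T.card = (Nat.unpair k).2 + 1 ∧
        w = interior {y | 1 / (((Nat.unpair k).1 : ℝ) + 1) <
          fDeriv14 g T y}} with hW
    refine ⟨W, ?_, ?_, ?_, ?_⟩
    · rintro k w ⟨T, hT, rfl⟩
      exact isOpen_interior
    · -- discreteness
      intro k x
      obtain ⟨U, hU, hkey⟩ := key14 ((Nat.unpair k).1 + 1) ((Nat.unpair k).2 + 1)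
        (by omega) (by omega) g hgcont hgrange hgsum x
      refine ⟨U, hU, ?_⟩
      rintro w₁ ⟨T₁, hT₁, rfl⟩ w₂ ⟨T₂, hT₂, rfl⟩ ⟨y₁, hy₁, hy₁'⟩ ⟨y₂, hy₂, hy₂'⟩
      have e1 := interior_subset hy₁'
      have e2 := interior_subset hy₂'
      have := hkey T₁ T₂ hT₁ hT₂
        ⟨y₁, hy₁, by push_cast; exact e1⟩ ⟨y₂, hy₂, by push_cast; exact e2⟩
      rw [this]
    · -- covering
      rw [Set.eq_univ_iff_forall]
      intro x
      rw [Set.mem_iUnion]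
      -- local finiteness data
      obtain ⟨N, hN, hGfin⟩ := p.locallyFinite x
      set G := hGfin.toFinset with hGdef
      have hfinx := p.locallyFinite.point_finite x
      set F := hfinx.toFinset with hFdef
      have hFG : F ⊆ G := by
        intro i hi
        rw [hfinx.mem_toFinset] at hi
        rw [hGfin.mem_toFinset]
        exact ⟨x, hi, mem_of_mem_nhds hN⟩
      have hFne : F.Nonempty := by
        by_contra h
        rw [Finset.not_nonempty_iff_eq_empty] at h
        have : ∀ i, g i x = 0 := by
          intro i
          by_contra hgi
          have : i ∈ F := hfinx.mem_toFinset.mpr hgi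
          simp [h] at this
        have h0 : HasSum (fun i => g i x) 0 := by
          simp only [this]; exact hasSum_zero
        exact one_ne_zero (h0.unique (hgsum x)).symm
      set c := F.sup' hFne (fun i => g i x) with hc
      obtain ⟨t₀, ht₀F, ht₀⟩ := F.exists_mem_eq_sup' hFne (fun i => g i x)
      have hc0 : 0 < c := by
        have h1 : g t₀ x ≠ 0 := by simpa using hfinx.mem_toFinset.mp ht₀F
        have h2 : 0 ≤ g t₀ x := (hgrange t₀ x).1
        rw [hc, ht₀]
        exact lt_of_le_of_ne h2 (Ne.symm h1)
      set T := F.filter (fun i => g i x = c) with hT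
      have hTne : T.Nonempty := ⟨t₀, Finset.mem_filter.mpr ⟨ht₀F, ht₀.symm⟩⟩
      have hTF : T ⊆ F := Finset.filter_subset _ _
      -- the second-largest bound
      set A : Finset ℝ := insert 0 ((G \ T).image fun i => g i x) with hA
      have hAne : A.Nonempty := ⟨0, Finset.mem_insert_self _ _⟩
      set ρ := A.max' hAne with hρ
      have hρ0 : 0 ≤ ρ := Finset.le_max' _ 0 (Finset.mem_insert_self _ _)
      have hρge : ∀ i ∈ G \ T, g i x ≤ ρ := by
        intro i hi
        apply Finset.le_max'
        exact Finset.mem_insert_of_mem (Finset.mem_image_of_mem _ hi)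
      have hρc : ρ < c := by
        apply Finset.max'_lt_iff _ hAne |>.mpr
        intro a ha
        rcases Finset.mem_insert.mp ha with rfl | ha
        · exact hc0
        · obtain ⟨i, hi, rfl⟩ := Finset.mem_image.mp ha
          rw [Finset.mem_sdiff] at hi
          rcases eq_or_ne (g i x) 0 with h0 | h0
          · rw [h0]; exact hc0
          · have hiF : i ∈ F := hfinx.mem_toFinset.mpr h0
            have hle : g i x ≤ c := by rw [hc]; exact Finset.le_sup' (fun i => g i x) hiF
            have hne : g i x ≠ c := fun h => hi.2 (Finset.mem_filter.mpr ⟨hiF, h⟩)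
            exact lt_of_le_of_ne hle hne
      set δ := (c - ρ) / 3 with hδdef
      have hδ : 0 < δ := by rw [hδdef]; linarith
      obtain ⟨mk, hmk⟩ := exists_nat_one_div_lt hδ
      refine ⟨Nat.pair mk (T.card - 1), ?_⟩
      have hcardT : 1 ≤ T.card := Finset.card_pos.mpr hTne
      refine ⟨interior {y | 1 / ((mk : ℝ) + 1) < fDeriv14 g T y}, ?_, ?_⟩
      · refine ⟨T, ?_, ?_⟩
        · simp [Nat.unpair_pair]; omega
        · simp [Nat.unpair_pair]
      · -- x is in the interior, via the open neighborhood V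
        rw [mem_interior]
        refine ⟨interior N ∩ ((⋂ t ∈ T, {y | c - δ < g t y}) ∩
            ⋂ i ∈ G \ T, {y | g i y < ρ + δ}), ?_, ?_, ?_⟩
        · -- subset
          rintro y ⟨hyN, hyT, hyG⟩
          simp only [Set.mem_iInter, Set.mem_setOf_eq] at hyT hyG
          have hinf : c - δ ≤ T.inf' hTne (fun t => g t y) :=
            Finset.le_inf' _ _ fun t ht => (hyT t ht).le
          have hsup : (⨆ t : {t : ι // t ∉ T}, g t.1 y) ≤ ρ + δ := by
            apply Real.iSup_le _ (by linarith)
            rintro ⟨s, hs⟩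
            by_cases hsG : s ∈ G
            · exact (hyG s (Finset.mem_sdiff.mpr ⟨hsG, hs⟩)).le
            · have : g s y = 0 := by
                by_contra hgs
                exact hsG (hGfin.mem_toFinset.mpr ⟨y, hgs, interior_subset hyN⟩)
              rw [this]; linarith
          rw [Set.mem_setOf_eq, fDeriv14, dif_pos hTne]
          have hd : δ ≤ (T.inf' hTne fun t => g t y) - (⨆ t : {t : ι // t ∉ T}, g t.1 y) := by
            rw [hδdef] at *
            linarith
          have hmax : δ ≤ max ((T.inf' hTne fun t => g t y) -
              (⨆ t : {t : ι // t ∉ T}, g t.1 y)) 0 := le_trans hd (le_max_left _ _)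
          have hcard1 : (1 : ℝ) ≤ T.card := by exact_mod_cast hcardT
          calc 1 / ((mk : ℝ) + 1) < δ := by exact_mod_cast hmk
            _ ≤ max _ 0 := hmax
            _ ≤ T.card * max _ 0 := le_mul_of_one_le_left (le_trans hδ.le hmax) hcard1
        · exact isOpen_interior.inter ((isOpen_biInter_finset fun t _ =>
            isOpen_lt continuous_const (hgcont t)).inter
            (isOpen_biInter_finset fun i _ => isOpen_lt (hgcont i) continuous_const))
        · refine ⟨mem_interior_iff_mem_nhds.mpr hN, ?_, ?_⟩
          · simp only [Set.mem_iInter, Set.mem_setOf_eq]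
            intro t ht
            have hgt : g t x = c := (Finset.mem_filter.mp ht).2
            rw [hgt]
            linarith
          · simp only [Set.mem_iInter, Set.mem_setOf_eq]
            intro i hi
            exact lt_of_le_of_lt (hρge i hi) (by linarith)
    · -- refinement
      rintro k w ⟨T, hT, rfl⟩
      have hTne : T.Nonempty := Finset.card_pos.mp (by omega)
      obtain ⟨t, ht⟩ := id hTne
      refine ⟨(t : Set X), t.2, ?_⟩
      intro y hy
      have hy' := interior_subset hy
      rw [Set.mem_setOf_eq, fDeriv14, dif_pos hTne] at hy'
      have hpos : 0 < max ((T.inf' hTne fun t => g t y) -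
          (⨆ t : {t : ι // t ∉ T}, g t.1 y)) 0 := by
        by_contra h
        push_neg at h
        have : max ((T.inf' hTne fun t => g t y) -
            (⨆ t : {t : ι // t ∉ T}, g t.1 y)) 0 = 0 := le_antisymm h (le_max_right _ _)
        rw [this, mul_zero] at hy'
        have : (0:ℝ) < 1 / ((Nat.unpair k).1 + 1) := by positivity
        linarith
      have hsup0 : 0 ≤ ⨆ t : {t : ι // t ∉ T}, g t.1 y :=
        Real.iSup_nonneg fun t => (hgrange _ y).1
      have hgap : 0 < (T.inf' hTne fun t => g t y) - (⨆ t : {t : ι // t ∉ T}, g t.1 y) := by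
        rcases (max_choice ((T.inf' hTne fun t => g t y) -
          (⨆ t : {t : ι // t ∉ T}, g t.1 y)) 0) with h | h
        · rwa [h] at hpos
        · rw [h] at hpos; exact absurd hpos (lt_irrefl 0)
      have hinfle : (T.inf' hTne fun t => g t y) ≤ g t y := Finset.inf'_le _ ht
      have : 0 < g t y := by linarith
      have hmem : y ∈ tsupport (p t) := subset_closure (by
        rw [Function.mem_support]; exact ne_of_gt this)
      exact hp t hmem
end

section
/- A Hausdorff topological space X is metrizable if and only if there exists a partition of unity {f_s}_{s∈S} on X such that the family {f_s^{-1}((0,1])}_{s∈S} is a basis for the topology of X. Moreover, given such a partition of unity, d(x,y) := ∑_{s∈S}|f_s(x) − f_s(y)| defines a metric inducing the topology of X. -/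
open Set TopologicalSpace

theorem part2 {X : Type} [TopologicalSpace X] [T2Space X]
    (S : Type) (f : S → X → ℝ)
    (hc : ∀ s, Continuous (f s)) (h01 : ∀ s x, f s x ∈ Set.Icc (0 : ℝ) 1)
    (hsum : ∀ x, HasSum (fun s => f s x) 1)
    (hbasis : TopologicalSpace.IsTopologicalBasis {U : Set X | ∃ s, U = {x | 0 < f s x}})
    (d : X → X → ℝ) (hd : d = fun x y => ∑' s, |f s x - f s y|) :
    (∀ x y, d x y = 0 ↔ x = y) ∧
    (∀ x y, d x y = d y x) ∧
    (∀ x y z, d x z ≤ d x y + d y z) ∧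
    (∀ U : Set X, IsOpen U ↔ ∀ x ∈ U, ∃ ε : ℝ, 0 < ε ∧ {y | d x y < ε} ⊆ U) := by
  subst hd
  have hnn : ∀ s x, 0 ≤ f s x := fun s x => (h01 s x).1
  have hsummable : ∀ x y : X, Summable fun s => |f s x - f s y| := by
    intro x y
    refine Summable.of_nonneg_of_le (fun s => abs_nonneg _) (fun s => ?_)
      ((hsum x).summable.add (hsum y).summable)
    calc |f s x - f s y| ≤ |f s x| + |f s y| := abs_sub _ _
      _ = f s x + f s y := by rw [abs_of_nonneg (hnn s x), abs_of_nonneg (hnn s y)]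
  -- separation
  have hsep : ∀ x y : X, x ≠ y → ∃ s, 0 < f s x ∧ f s y = 0 := by
    intro x y hxy
    obtain ⟨V, ⟨s, rfl⟩, hxV, hVU⟩ := hbasis.exists_subset_of_mem_open
      (by simpa using hxy : x ∈ ({y}ᶜ : Set X)) (isOpen_compl_singleton)
    refine ⟨s, hxV, ?_⟩
    have : y ∉ {x | 0 < f s x} := fun h => (hVU h) rfl
    exact le_antisymm (not_lt.1 this) (hnn s y)
  have hpos : ∀ x y : X, x ≠ y → 0 < (∑' s, |f s x - f s y|) := by
    intro x y hxy
    obtain ⟨s, hs, hs0⟩ := hsep x y hxy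
    have h1 : |f s x - f s y| ≤ ∑' s, |f s x - f s y| :=
      Summable.le_tsum (hsummable x y) s (fun j _ => abs_nonneg _)
    have : 0 < |f s x - f s y| := by rw [hs0, sub_zero, abs_of_nonneg (hnn s x)]; exact hs
    linarith
  refine ⟨?_, ?_, ?_, ?_⟩
  · intro x y
    constructor
    · intro h
      by_contra hxy
      exact absurd h (ne_of_gt (hpos x y hxy))
    · rintro rfl
      simp
  · intro x y
    exact tsum_congr fun s => abs_sub_comm _ _
  · intro x y z
    calc (∑' s, |f s x - f s z|)
        ≤ ∑' s, (|f s x - f s y| + |f s y - f s z|) :=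
          Summable.tsum_le_tsum (fun s => abs_sub_le _ _ _) (hsummable x z)
            ((hsummable x y).add (hsummable y z))
      _ = (∑' s, |f s x - f s y|) + ∑' s, |f s y - f s z| :=
          Summable.tsum_add (hsummable x y) (hsummable y z)
  · intro U
    constructor
    · intro hU x hxU
      obtain ⟨V, ⟨s, rfl⟩, hxV, hVU⟩ := hbasis.exists_subset_of_mem_open hxU hU
      refine ⟨f s x, hxV, fun y hy => ?_⟩
      simp only [Set.mem_setOf_eq] at hy ⊢
      have h1 : |f s x - f s y| ≤ ∑' t, |f t x - f t y| :=
        Summable.le_tsum (hsummable x y) s (fun j _ => abs_nonneg _)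
      have h2 : f s x - f s y ≤ |f s x - f s y| := le_abs_self _
      exact hVU (show 0 < f s y by linarith)
    · intro h
      rw [isOpen_iff_mem_nhds]
      intro x hxU
      obtain ⟨ε, hε, hball⟩ := h x hxU
      -- find finite F with ∑_{s ∈ F} f s x > 1 - ε/4
      have : ∀ᶠ F in Filter.atTop, (∑ s ∈ F, f s x) ∈ Set.Ioi (1 - ε/4) :=
        (hsum x).eventually (Ioi_mem_nhds (by linarith))
      obtain ⟨F, hF⟩ := this.exists
      simp only [Set.mem_Ioi] at hF
      -- the open set W
      set W : Set X := {y | (∑ s ∈ F, |f s x - f s y|) + (1 - ∑ s ∈ F, f s y) < ε/2} with hW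
      have hWopen : IsOpen W := by
        have hcont : Continuous fun y =>
            (∑ s ∈ F, |f s x - f s y|) + (1 - ∑ s ∈ F, f s y) := by
          refine Continuous.add ?_ (continuous_const.sub ?_)
          · exact continuous_finset_sum _ fun s _ => (continuous_const.sub (hc s)).abs
          · exact continuous_finset_sum _ fun s _ => hc s
        exact isOpen_lt hcont continuous_const
      have hxW : x ∈ W := by
        simp only [hW, Set.mem_setOf_eq, sub_self, abs_zero, Finset.sum_const_zero, zero_add]
        linarith
      refine Filter.mem_of_superset (hWopen.mem_nhds hxW) (fun y hy => ?_)
      refine hball ?_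
      simp only [hW, Set.mem_setOf_eq] at hy ⊢
      -- split the tsum
      have key : ∀ g : S → ℝ, Summable g →
          (∑ s ∈ F, g s) + (∑' s : ((↑F : Set S)ᶜ : Set S), g s) = ∑' s, g s := by
        intro g hg
        rw [← Finset.tsum_subtype F g]
        exact Summable.tsum_add_tsum_compl (hg.subtype _) (hg.subtype _)
      have hsplit := key _ (hsummable x y)
      have htail : (∑' s : ((↑F : Set S)ᶜ : Set S), |f s.1 x - f s.1 y|)
          ≤ (1 - ∑ s ∈ F, f s x) + (1 - ∑ s ∈ F, f s y) := by
        have h1 : (∑' s : ((↑F : Set S)ᶜ : Set S), |f s.1 x - f s.1 y|)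
            ≤ ∑' s : ((↑F : Set S)ᶜ : Set S), (f s.1 x + f s.1 y) := by
          refine Summable.tsum_le_tsum (fun s => ?_) ((hsummable x y).subtype _)
            (((hsum x).summable.add (hsum y).summable).subtype _)
          calc |f s.1 x - f s.1 y| ≤ |f s.1 x| + |f s.1 y| := abs_sub _ _
            _ = f s.1 x + f s.1 y := by
                rw [abs_of_nonneg (hnn _ x), abs_of_nonneg (hnn _ y)]
        have h2 : (∑' s : ((↑F : Set S)ᶜ : Set S), (f s.1 x + f s.1 y))
            = (∑' s : ((↑F : Set S)ᶜ : Set S), f s.1 x)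
              + ∑' s : ((↑F : Set S)ᶜ : Set S), f s.1 y :=
          Summable.tsum_add ((hsum x).summable.subtype _) ((hsum y).summable.subtype _)
        have h3 : (∑ s ∈ F, f s x) + (∑' s : ((↑F : Set S)ᶜ : Set S), f s.1 x) = 1 := by
          rw [key _ (hsum x).summable, (hsum x).tsum_eq]
        have h4 : (∑ s ∈ F, f s y) + (∑' s : ((↑F : Set S)ᶜ : Set S), f s.1 y) = 1 := by
          rw [key _ (hsum y).summable, (hsum y).tsum_eq]
        rw [h2] at h1
        linarith
      linarith [hsplit, htail, hy, hF]


theorem part1 {X : Type} [TopologicalSpace X] [h : TopologicalSpace.MetrizableSpace X] :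
    ∃ (S : Type) (f : S → X → ℝ),
      (∀ s, Continuous (f s)) ∧ (∀ s x, f s x ∈ Set.Icc (0 : ℝ) 1) ∧
      (∀ x, HasSum (fun s => f s x) 1) ∧
      TopologicalSpace.IsTopologicalBasis {U : Set X | ∃ s, U = {x | 0 < f s x}} := by
  letI : MetricSpace X := TopologicalSpace.metrizableSpaceMetric X
  have hcov : ∀ n : ℕ, (univ : Set X) ⊆ ⋃ c : X, Metric.ball c (1 / (n + 1)) := by
    intro n x _
    exact mem_iUnion.2 ⟨x, Metric.mem_ball_self (by positivity)⟩
  choose p hp using fun n : ℕ =>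
    PartitionOfUnity.exists_isSubordinate (ι := X) (X := X) isClosed_univ
      (fun c => Metric.ball c (1 / (n + 1))) (fun c => Metric.isOpen_ball) (hcov n)
  set f : (ℕ × X) → X → ℝ := fun s x => (1 / 2 : ℝ) ^ (s.1 + 1) * p s.1 s.2 x with hf
  -- fiberwise sums
  have hfib : ∀ (n : ℕ) (x : X), HasSum (fun c : X => p n c x) 1 := by
    intro n x
    have hfin : (Function.support fun c : X => p n c x).Finite := by
      exact (p n).locallyFinite.point_finite x
    have h1 : HasSum (fun c : X => p n c x) (∑ c ∈ hfin.toFinset, p n c x) :=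
      hasSum_sum_of_ne_finset_zero (fun c hc => by
        simpa [Function.mem_support] using fun h' => hc (hfin.mem_toFinset.2 h'))
    have h2 : (∑ c ∈ hfin.toFinset, p n c x) = 1 := by
      rw [← finsum_eq_sum _ hfin]
      exact (p n).sum_eq_one (mem_univ x)
    rwa [h2] at h1
  have hfib' : ∀ (n : ℕ) (x : X),
      HasSum (fun c : X => f (n, c) x) ((1 / 2 : ℝ) ^ (n + 1)) := by
    intro n x
    simpa [hf] using (hfib n x).mul_left ((1 / 2 : ℝ) ^ (n + 1))
  have hgeom : HasSum (fun n : ℕ => (1 / 2 : ℝ) ^ (n + 1)) 1 := by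
    have := (hasSum_geometric_of_lt_one (r := (1/2 : ℝ)) (by norm_num) (by norm_num)).mul_left
      (1 / 2 : ℝ)
    convert this using 2 with n
    · rfl
    · ring
    · norm_num
  have hnn : ∀ (s : ℕ × X) (x : X), 0 ≤ f s x := fun s x =>
    mul_nonneg (by positivity) ((p s.1).nonneg s.2 x)
  have hsum : ∀ x, HasSum (fun s : ℕ × X => f s x) 1 := by
    intro x
    have hsummable : Summable (fun s : ℕ × X => f s x) := by
      refine (summable_prod_of_nonneg (fun s => hnn s x)).2 ⟨fun n => (hfib' n x).summable, ?_⟩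
      refine Summable.congr hgeom.summable (fun n => ?_)
      exact ((hfib' n x).tsum_eq).symm
    have hhs := hsummable.hasSum
    have := hhs.prod_fiberwise (fun n => hfib' n x)
    rwa [← hgeom.unique this] at hhs
  refine ⟨ℕ × X, f, ?_, ?_, hsum, ?_⟩
  · exact fun s => continuous_const.mul (p s.1 s.2).continuous
  · intro s x
    refine ⟨hnn s x, ?_⟩
    show (1 / 2 : ℝ) ^ (s.1 + 1) * p s.1 s.2 x ≤ 1
    exact mul_le_one₀ (pow_le_one₀ (by norm_num) (by norm_num)) ((p s.1).nonneg s.2 x)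
      ((p s.1).le_one s.2 x)
  · refine isTopologicalBasis_of_isOpen_of_nhds ?_ ?_
    · rintro V ⟨s, rfl⟩
      exact isOpen_lt continuous_const (continuous_const.mul (p s.1 s.2).continuous)
    · intro x U hxU hU
      obtain ⟨ε, hε, hball⟩ := Metric.isOpen_iff.1 hU x hxU
      obtain ⟨n, hn⟩ := exists_nat_one_div_lt (show (0:ℝ) < ε / 2 by linarith)
      have hnc : ∃ c : X, p n c x ≠ 0 := by
        by_contra hcon
        push_neg at hcon
        have : (∑ᶠ c, p n c x) = 0 := finsum_eq_zero_of_forall_eq_zero hcon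
        rw [(p n).sum_eq_one (mem_univ x)] at this
        norm_num at this
      obtain ⟨c, hc⟩ := hnc
      refine ⟨{y | 0 < f (n, c) y}, ⟨(n, c), rfl⟩, ?_, ?_⟩
      · exact mul_pos (by positivity) (lt_of_le_of_ne ((p n).nonneg c x) (Ne.symm hc))
      · intro y hy
        simp only [mem_setOf_eq] at hy
        have hy' : p n c y ≠ 0 := by
          intro h0
          rw [hf] at hy
          simp [h0] at hy
        have hmem : ∀ z : X, p n c z ≠ 0 → z ∈ Metric.ball c (1 / (n + 1)) := by
          intro z hz
          exact (hp n) c (subset_closure (Function.mem_support.2 hz))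
        have h1 := hmem x hc
        have h2 := hmem y hy'
        rw [Metric.mem_ball] at h1 h2
        refine hball ?_
        rw [Metric.mem_ball]
        calc dist y x ≤ dist y c + dist c x := dist_triangle _ _ _
          _ = dist y c + dist x c := by rw [dist_comm c x]
          _ < 1 / (n + 1) + 1 / (n + 1) := by linarith
          _ < ε := by linarith


theorem stmt_15 {X : Type} [TopologicalSpace X] [T2Space X] :
    (TopologicalSpace.MetrizableSpace X ↔
      ∃ (S : Type) (f : S → X → ℝ),
        (∀ s, Continuous (f s)) ∧ (∀ s x, f s x ∈ Set.Icc (0 : ℝ) 1) ∧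
        (∀ x, HasSum (fun s => f s x) 1) ∧
        TopologicalSpace.IsTopologicalBasis {U : Set X | ∃ s, U = {x | 0 < f s x}}) ∧
    (∀ (S : Type) (f : S → X → ℝ),
      (∀ s, Continuous (f s)) → (∀ s x, f s x ∈ Set.Icc (0 : ℝ) 1) →
      (∀ x, HasSum (fun s => f s x) 1) →
      TopologicalSpace.IsTopologicalBasis {U : Set X | ∃ s, U = {x | 0 < f s x}} →
      ∀ d : X → X → ℝ, (d = fun x y => ∑' s, |f s x - f s y|) →
        (∀ x y, d x y = 0 ↔ x = y) ∧
        (∀ x y, d x y = d y x) ∧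
        (∀ x y z, d x z ≤ d x y + d y z) ∧
        (∀ U : Set X, IsOpen U ↔ ∀ x ∈ U, ∃ ε : ℝ, 0 < ε ∧ {y | d x y < ε} ⊆ U)) := by
  constructor
  · constructor
    · intro h
      exact part1
    · rintro ⟨S, f, hc, h01, hsum, hbasis⟩
      obtain ⟨h1, h2, h3, h4⟩ := part2 S f hc h01 hsum hbasis _ rfl
      letI m : MetricSpace X := MetricSpace.ofDistTopology _ (fun x => (h1 x x).2 rfl) h2 h3
        (fun U => h4 U) (fun x y hxy => (h1 x y).1 hxy)
      exact @TopologicalSpace.MetrizableSpace.mk X _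
        (@UniformSpace.pseudoMetrizableSpace X m.toUniformSpace inferInstance) inferInstance
  · intro S f hc h01 hsum hbasis d hd
    exact part2 S f hc h01 hsum hbasis d hd
end

section
/- Let X be a topological space, U and V open subsets with X = U ∪ V, f = {f_s}_{s∈S} a partition of unity on U, g = {g_s}_{s∈S} a partition of unity on V, and α : X → [0,1] continuous with α^{-1}((0,1]) ⊆ U and α^{-1}([0,1)) ⊆ V. Then h_s := α·f_s + (1−α)·g_s (where α·f_s is extended by 0 outside U and (1−α)·g_s by 0 outside V) defines a partition of unity {h_s}_{s∈S} on X, and each h_s is continuous. -/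
theorem stmt_16 {X : Type*} [TopologicalSpace X] {S : Type*}
    (U V : Set X) (hUo : IsOpen U) (hVo : IsOpen V) (hUV : U ∪ V = Set.univ)
    (f g : S → X → ℝ)
    (hfc : ∀ s, ContinuousOn (f s) U) (hgc : ∀ s, ContinuousOn (g s) V)
    (hf0 : ∀ s, ∀ x ∈ U, 0 ≤ f s x) (hg0 : ∀ s, ∀ x ∈ V, 0 ≤ g s x)
    (hfsum : ∀ x ∈ U, HasSum (fun s => f s x) 1)
    (hgsum : ∀ x ∈ V, HasSum (fun s => g s x) 1)
    (α : X → ℝ) (hαc : Continuous α) (hα01 : ∀ x, α x ∈ Set.Icc (0 : ℝ) 1)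
    (hαU : {x | 0 < α x} ⊆ U) (hαV : {x | α x < 1} ⊆ V) :
    ∀ h : S → X → ℝ,
      (h = fun s x => U.indicator (fun x => α x * f s x) x +
                      V.indicator (fun x => (1 - α x) * g s x) x) →
      (∀ s, Continuous (h s)) ∧ (∀ x, HasSum (fun s => h s x) 1) := by
  intro h hh
  subst hh
  have hfle : ∀ s, ∀ x ∈ U, f s x ≤ 1 := fun s x hx =>
    le_hasSum (hfsum x hx) s (fun s' _ => hf0 s' x hx)
  have hgle : ∀ s, ∀ x ∈ V, g s x ≤ 1 := fun s x hx =>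
    le_hasSum (hgsum x hx) s (fun s' _ => hg0 s' x hx)
  have key : ∀ (W : Set X), IsOpen W → ∀ (φ : X → ℝ), Continuous φ →
      (∀ x, 0 ≤ φ x) → {x | 0 < φ x} ⊆ W → ∀ (p : X → ℝ),
      ContinuousOn p W → (∀ x ∈ W, 0 ≤ p x) → (∀ x ∈ W, p x ≤ 1) →
      Continuous (fun x => W.indicator (fun x => φ x * p x) x) := by
    intro W hWo φ hφc hφ0 hφW p hpc hp0 hp1
    rw [continuous_iff_continuousAt]
    intro x
    by_cases hx : x ∈ W
    · have hca : ContinuousAt (fun x => φ x * p x) x :=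
        hφc.continuousAt.mul (hpc.continuousAt (hWo.mem_nhds hx))
      exact hca.congr (Filter.eventuallyEq_of_mem (hWo.mem_nhds hx)
        fun y hy => (Set.indicator_of_mem hy (fun x => φ x * p x)).symm)
    · have hφx : φ x = 0 := by
        by_contra hne
        exact hx (hφW (lt_of_le_of_ne (hφ0 x) (Ne.symm hne)))
      have h0 : W.indicator (fun x => φ x * p x) x = 0 := Set.indicator_of_notMem hx _
      rw [ContinuousAt, h0]
      apply squeeze_zero (g := φ)
      · intro y
        by_cases hy : y ∈ W
        · rw [Set.indicator_of_mem hy]; exact mul_nonneg (hφ0 y) (hp0 y hy)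
        · rw [Set.indicator_of_notMem hy]
      · intro y
        by_cases hy : y ∈ W
        · rw [Set.indicator_of_mem hy]
          calc φ y * p y ≤ φ y * 1 := mul_le_mul_of_nonneg_left (hp1 y hy) (hφ0 y)
          _ = φ y := mul_one _
        · rw [Set.indicator_of_notMem hy]; exact hφ0 y
      · have ht := hφc.continuousAt (x := x)
        rw [ContinuousAt, hφx] at ht
        exact ht
  constructor
  · intro s
    exact (key U hUo α hαc (fun x => (hα01 x).1) hαU (f s) (hfc s)
        (hf0 s) (hfle s)).add
      (key V hVo (fun x => 1 - α x) (continuous_const.sub hαc)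
        (fun x => sub_nonneg.mpr (hα01 x).2) (fun x hx => hαV (by simpa using hx))
        (g s) (hgc s) (hg0 s) (hgle s))
  · intro x
    by_cases hU : x ∈ U <;> by_cases hV : x ∈ V
    · have := ((hfsum x hU).mul_left (α x)).add ((hgsum x hV).mul_left (1 - α x))
      simpa [Set.indicator_of_mem hU, Set.indicator_of_mem hV] using this
    · have hα1 : α x = 1 := le_antisymm (hα01 x).2 (by
        by_contra hlt; exact hV (hαV (lt_of_not_ge hlt)))
      simpa [Set.indicator_of_mem hU, Set.indicator_of_notMem hV, hα1] using hfsum x hU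
    · have hα0 : α x = 0 := le_antisymm (by
        by_contra hgt; exact hU (hαU (lt_of_not_ge hgt))) (hα01 x).1
      simpa [Set.indicator_of_notMem hU, Set.indicator_of_mem hV, hα0] using hgsum x hV
    · exact absurd (hUV ▸ Set.mem_univ x) (fun hc => hc.elim hU hV)
end

section
/- Let J be a set, {X_j}_{j∈J} a family of compact topological spaces, A a closed subset of the product ∏_{j∈J} X_j, and f : A → (Y, d) a continuous map to a metric space. For every ε > 0 there exists a finite subset F of J such that for all x = (x_j), y = (y_j) ∈ A, if x_j = y_j for all j ∈ F then d(f(x), f(y)) < ε. -/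
theorem stmt_17 {J : Type*} {X : J → Type*}
    [∀ j, TopologicalSpace (X j)] [∀ j, CompactSpace (X j)] [∀ j, T2Space (X j)]
    {Y : Type*} [MetricSpace Y]
    (A : Set (∀ j, X j)) (hA : IsClosed A)
    (f : A → Y) (hf : Continuous f) :
    ∀ ε : ℝ, 0 < ε → ∃ F : Finset J, ∀ x y : A,
      (∀ j ∈ F, (x : ∀ j, X j) j = (y : ∀ j, X j) j) → dist (f x) (f y) < ε := by
  intro ε hε
  haveI : CompactSpace A := isCompact_iff_compactSpace.mp (hA.isCompact)
  classical
  by_contra h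
  push_neg at h
  set S : Finset J → Set (A × A) := fun F =>
    {p | (∀ j ∈ F, (p.1 : ∀ j, X j) j = (p.2 : ∀ j, X j) j) ∧ ε ≤ dist (f p.1) (f p.2)}
    with hS
  have hclosed : ∀ F, IsClosed (S F) := by
    intro F
    apply IsClosed.inter
    · have : {p : A × A | ∀ j ∈ F, (p.1 : ∀ j, X j) j = (p.2 : ∀ j, X j) j}
          = ⋂ j ∈ F, {p : A × A | (p.1 : ∀ j, X j) j = (p.2 : ∀ j, X j) j} := by
        ext p; simp
      show IsClosed {p : A × A | ∀ j ∈ F, (p.1 : ∀ j, X j) j = (p.2 : ∀ j, X j) j}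
      rw [this]
      apply isClosed_biInter
      intro j hj
      exact isClosed_eq
        (((continuous_apply j).comp continuous_subtype_val).comp continuous_fst)
        (((continuous_apply j).comp continuous_subtype_val).comp continuous_snd)
    · exact isClosed_le continuous_const
        (continuous_dist.comp ((hf.comp continuous_fst).prodMk (hf.comp continuous_snd)))
  have hne : ∀ F, (S F).Nonempty := by
    intro F
    obtain ⟨x, y, hxy, hd⟩ := h F
    exact ⟨(x, y), hxy, hd⟩
  have hdir : Directed (· ⊇ ·) S := by
    intro F G
    refine ⟨F ∪ G, ?_, ?_⟩
    · intro p hp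
      exact ⟨fun j hj => hp.1 j (Finset.mem_union_left _ hj), hp.2⟩
    · intro p hp
      exact ⟨fun j hj => hp.1 j (Finset.mem_union_right _ hj), hp.2⟩
  obtain ⟨p, hp⟩ := IsCompact.nonempty_iInter_of_directed_nonempty_isCompact_isClosed
    S hdir hne (fun F => (hclosed F).isCompact) hclosed
  have heq : p.1 = p.2 := by
    apply Subtype.ext
    funext j
    exact ((Set.mem_iInter.mp hp {j}).1 j (Finset.mem_singleton_self j))
  have := (Set.mem_iInter.mp hp ∅).2
  rw [heq] at this
  simp at this
  linarith
end

section
/- Let X be a topological space, (Y, d) a metric space, and {f_s : X → Y}_{s∈S} a family of functions such that (i) the family is equicontinuous, and (ii) for each x ∈ X there is a compact subset Y_x ⊆ Y containing f_s(x) for all s ∈ S. Then there exist a compact Hausdorff space Z and a continuous map f : X × Z → Y such that every f_s equals f(·, z) for some z ∈ Z. Conversely, if such Z and f exist, then (i) and (ii) hold. -/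
theorem stmt_18 {X Y : Type} [TopologicalSpace X] [MetricSpace Y] {S : Type}
    (f : S → X → Y) :
    ((∀ ε : ℝ, 0 < ε → ∀ a : X, ∃ U ∈ nhds a,
        ∀ s, ∀ x ∈ U, ∀ y ∈ U, dist (f s x) (f s y) < ε) ∧
      (∀ x : X, ∃ K : Set Y, IsCompact K ∧ ∀ s, f s x ∈ K)) ↔
    (∃ (Z : Type) (_ : TopologicalSpace Z) (_ : CompactSpace Z) (_ : T2Space Z)
        (F : X × Z → Y), Continuous F ∧ ∀ s : S, ∃ z : Z, ∀ x : X, f s x = F (x, z)) := by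
  constructor
  · rintro ⟨heq, hcomp⟩
    choose K hK hfK using hcomp
    -- Z := closure of range f inside a compact product
    set T : Set (X → Y) := Set.pi Set.univ K with hT
    have hTcomp : IsCompact T := isCompact_univ_pi hK
    have hTclosed : IsClosed T := isClosed_set_pi fun x _ => (hK x).isClosed
    set Zs : Set (X → Y) := closure (Set.range f) with hZs
    have hsub : Set.range f ⊆ T := by
      rintro g ⟨s, rfl⟩ x _
      exact hfK x s
    have hZsub : Zs ⊆ T := closure_minimal hsub hTclosed
    have hZcomp : IsCompact Zs := hTcomp.of_isClosed_subset isClosed_closure hZsub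
    -- key: closure keeps the equicontinuity estimate (non-strict)
    have key : ∀ ε : ℝ, 0 < ε → ∀ a : X, ∃ U ∈ nhds a,
        ∀ g ∈ Zs, ∀ x ∈ U, ∀ y ∈ U, dist (g x) (g y) ≤ ε := by
      intro ε hε a
      obtain ⟨U, hU, hU'⟩ := heq ε hε a
      refine ⟨U, hU, fun g hg x hx y hy => ?_⟩
      have hCcl : IsClosed {h : X → Y | dist (h x) (h y) ≤ ε} :=
        isClosed_le (((continuous_apply x).dist (continuous_apply y))) continuous_const
      have : Set.range f ⊆ {h : X → Y | dist (h x) (h y) ≤ ε} := by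
        rintro h ⟨s, rfl⟩
        exact (hU' s x hx y hy).le
      exact closure_minimal this hCcl hg
    haveI : CompactSpace Zs := isCompact_iff_compactSpace.mp hZcomp
    refine ⟨Zs, inferInstance, inferInstance, inferInstance,
      fun p => (p.2 : X → Y) p.1, ?_, ?_⟩
    · rw [continuous_iff_continuousAt]
      rintro ⟨a, g₀⟩
      rw [ContinuousAt, Metric.tendsto_nhds]
      intro ε hε
      obtain ⟨U, hU, hU'⟩ := key (ε/3) (by linarith) a
      have haU : a ∈ U := mem_of_mem_nhds hU
      have hVopen : IsOpen {g : Zs | dist ((g : X → Y) a) ((g₀ : X → Y) a) < ε/3} := by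
        have : Continuous fun g : Zs => dist ((g : X → Y) a) ((g₀ : X → Y) a) :=
          (((continuous_apply a).comp continuous_subtype_val).dist continuous_const)
        exact isOpen_lt this continuous_const
      have hmem : (U ×ˢ {g : Zs | dist ((g : X → Y) a) ((g₀ : X → Y) a) < ε/3}) ∈
          nhds ((a, g₀) : X × Zs) := by
        refine prod_mem_nhds hU (hVopen.mem_nhds ?_)
        simp only [Set.mem_setOf_eq, dist_self]; linarith
      filter_upwards [hmem]
      rintro ⟨x, g⟩ ⟨hx, hg⟩
      simp only [Set.mem_setOf_eq] at hx hg
      have h1 : dist ((g : X → Y) x) ((g : X → Y) a) ≤ ε/3 := hU' g g.2 x hx a haU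
      calc dist ((g : X → Y) x) ((g₀ : X → Y) a)
          ≤ dist ((g : X → Y) x) ((g : X → Y) a)
            + dist ((g : X → Y) a) ((g₀ : X → Y) a) := dist_triangle _ _ _
        _ < ε := by linarith [hg]
    · intro s
      refine ⟨⟨f s, subset_closure ⟨s, rfl⟩⟩, fun x => rfl⟩
  · rintro ⟨Z, _, _, _, F, hF, hFs⟩
    choose z hz using hFs
    constructor
    · intro ε hε a
      -- for each w : Z pick neighborhoods
      have hpt : ∀ w : Z, ∃ U ∈ nhds a, ∃ W ∈ nhds w,
          ∀ x ∈ U, ∀ v ∈ W, dist (F (x, v)) (F (a, w)) < ε/2 := by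
        intro w
        have hc : ContinuousAt F (a, w) := hF.continuousAt
        have : {y : Y | dist y (F (a, w)) < ε/2} ∈ nhds (F (a, w)) :=
          Metric.ball_mem_nhds _ (by linarith)
        have := hc this
        rw [Filter.mem_map, mem_nhds_prod_iff] at this
        obtain ⟨U, hU, W, hW, hUW⟩ := this
        exact ⟨U, hU, W, hW, fun x hx v hv => hUW (Set.mk_mem_prod hx hv)⟩
      choose U hU W hW hUW using hpt
      obtain ⟨t, ht⟩ := isCompact_univ.elim_nhds_subcover W (fun w _ => hW w)
      refine ⟨⋂ w ∈ t, U w, (Filter.biInter_finset_mem t).mpr fun w _ => hU w, ?_⟩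
      intro s x hx y hy
      obtain ⟨w, hwt, hzw⟩ : ∃ w ∈ t, z s ∈ W w := by
        have := ht.2 (Set.mem_univ (z s))
        simpa using this
      have hxU : x ∈ U w := Set.mem_iInter₂.mp hx w hwt
      have hyU : y ∈ U w := Set.mem_iInter₂.mp hy w hwt
      have h1 := hUW w x hxU (z s) hzw
      have h2 := hUW w y hyU (z s) hzw
      rw [hz s x, hz s y]
      calc dist (F (x, z s)) (F (y, z s))
          ≤ dist (F (x, z s)) (F (a, w)) + dist (F (a, w)) (F (y, z s)) := dist_triangle _ _ _
        _ < ε := by rw [dist_comm (F (a, w))]; linarith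
    · intro x
      refine ⟨F '' ({x} ×ˢ (Set.univ : Set Z)), ?_, fun s => ?_⟩
      · exact (isCompact_singleton.prod isCompact_univ).image hF
      · rw [hz s x]
        exact ⟨(x, z s), Set.mk_mem_prod rfl trivial, rfl⟩
end
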